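/- arXiv:2403.16177 — 5 statements merged into one kernel-verified Lean document; each statement's English description precedes it below -/
import Mathlib

section
/- Under experimental internal validity, short-term external validity, latent unconfounding, consistency and strict overlap, for each w ∈ {0,1} the mean long-term potential outcome in the observational group is identified by E[Y2(w) | G=1] = Σ_{x∈𝒳, P(X=x|G=1)>0} P(X=x | G=1) · Σ_{y∈𝒴} P(Y1=y | W=w, X=x, G=0) · E[Y2 | Y1=y, W=w, X=x, G=1]; consequently the long-term average treatment effect E[Y2(1) − Y2(0) | G=1] equals the difference of these two identified expressions. -/
open MeasureTheory ProbabilityTheory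

/-- Conditional probability `P(A | B)` as a real number. -/
noncomputable def cP {Ω : Type*} [MeasurableSpace Ω] (P : Measure Ω) (A B : Set Ω) : ℝ :=
  ((P[|B]) A).toReal

/-- Conditional expectation `E[Y | B]` (expectation under the conditional measure). -/
noncomputable def cE {Ω : Type*} [MeasurableSpace Ω] (P : Measure Ω) (Y : Ω → ℝ) (B : Set Ω) :
    ℝ :=
  ∫ ω, Y ω ∂(P[|B])

section Aux

set_option linter.unusedSectionVars false

variable {Ω : Type*} [MeasurableSpace Ω] (P : Measure Ω) [IsProbabilityMeasure P]

lemma cP_eq (A B : Set Ω) (hB : MeasurableSet B) :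
    cP P A B = (P (B ∩ A)).toReal / (P B).toReal := by
  unfold cP
  rw [cond_apply hB, ENNReal.toReal_mul, ENNReal.toReal_inv, inv_mul_eq_div]

lemma cE_eq (Y : Ω → ℝ) (B : Set Ω) :
    cE P Y B = (∫ ω in B, Y ω ∂P) / (P B).toReal := by
  unfold cE
  rw [show P[|B] = (P B)⁻¹ • P.restrict B from rfl, integral_smul_measure,
    ENNReal.toReal_inv, smul_eq_mul, inv_mul_eq_div]

lemma p_pos (A : Set Ω) (h : 0 < P A) : 0 < (P A).toReal :=
  ENNReal.toReal_pos h.ne' (measure_ne_top P A)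

lemma cP_mul_cE_eq (Y : Ω → ℝ) (A B : Set Ω) (hB : MeasurableSet B) (hB0 : P B ≠ 0) :
    cP P A B * cE P Y (A ∩ B) = (∫ ω in A ∩ B, Y ω ∂P) / (P B).toReal := by
  rw [cP_eq P A B hB, cE_eq P Y (A ∩ B), Set.inter_comm B A]
  rcases eq_or_ne (P (A ∩ B)) 0 with h0 | h0
  · have hI : ∫ ω in A ∩ B, Y ω ∂P = 0 := by
      rw [Measure.restrict_eq_zero.2 h0]; simp
    simp [h0, hI]
  · have h1 : (P (A ∩ B)).toReal ≠ 0 :=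
      (p_pos P (A ∩ B) (pos_iff_ne_zero.2 h0)).ne'
    rw [div_mul_div_comm, mul_comm ((P B).toReal), mul_div_mul_left _ _ h1]

lemma partition_integral {κ : Type*} [Fintype κ] [MeasurableSpace κ]
    [MeasurableSingletonClass κ]
    (f : Ω → κ) (hf : Measurable f) (Y : Ω → ℝ) (hY : Integrable Y P)
    (B : Set Ω) (hB : MeasurableSet B) :
    ∫ ω in B, Y ω ∂P = ∑ k : κ, ∫ ω in {ω | f ω = k} ∩ B, Y ω ∂P := by
  have hmk : ∀ k : κ, MeasurableSet {ω | f ω = k} :=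
    fun k => hf (measurableSet_singleton k)
  have step : ∀ k : κ, ∫ ω in {ω | f ω = k} ∩ B, Y ω ∂P
      = ∫ ω in B, ({ω | f ω = k}).indicator Y ω ∂P := by
    intro k
    rw [setIntegral_indicator (hmk k), Set.inter_comm]
  calc ∫ ω in B, Y ω ∂P
      = ∫ ω in B, ∑ k : κ, ({ω | f ω = k}).indicator Y ω ∂P := by
        refine integral_congr_ae (ae_of_all _ fun ω => ?_)
        show Y ω = ∑ k : κ, ({ω' | f ω' = k}).indicator Y ω
        symm
        have hs : ∑ k : κ, ({ω' | f ω' = k}).indicator Y ω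
            = ({ω' | f ω' = f ω}).indicator Y ω :=
          Finset.sum_eq_single (f ω)
            (fun k _ hk => by simp [Set.indicator_apply, Ne.symm hk]) (by simp)
        rw [hs]; simp [Set.indicator_apply]
    _ = ∑ k : κ, ∫ ω in B, ({ω | f ω = k}).indicator Y ω ∂P := by
        refine integral_finset_sum _ fun k _ => ?_
        exact (hY.restrict).indicator (hmk k)
    _ = ∑ k : κ, ∫ ω in {ω | f ω = k} ∩ B, Y ω ∂P := by
        exact Finset.sum_congr rfl fun k _ => (step k).symm

lemma partition_cE {κ : Type*} [Fintype κ] [MeasurableSpace κ]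
    [MeasurableSingletonClass κ]
    (f : Ω → κ) (hf : Measurable f) (Y : Ω → ℝ) (hY : Integrable Y P)
    (B : Set Ω) (hB : MeasurableSet B) (hB0 : P B ≠ 0) :
    cE P Y B = ∑ k : κ, cP P {ω | f ω = k} B * cE P Y ({ω | f ω = k} ∩ B) := by
  rw [cE_eq, partition_integral P f hf Y hY B hB, Finset.sum_div]
  exact Finset.sum_congr rfl fun k _ => (cP_mul_cE_eq P Y _ B hB hB0).symm

/-- From independence of two events under `P[|C]`, a conditional-probability invariance. -/
lemma indep_ratio (C A B : Set Ω) (hC : MeasurableSet C) (hC0 : 0 < P C)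
    (h : (P[|C]) (A ∩ B) = (P[|C]) A * (P[|C]) B) (hA0 : 0 < P (C ∩ A)) :
    (P (C ∩ (A ∩ B))).toReal / (P (C ∩ A)).toReal
      = (P (C ∩ B)).toReal / (P C).toReal := by
  rw [show (P[|C]) (A ∩ B) = P[A ∩ B|C] from rfl, show (P[|C]) A = P[A|C] from rfl,
    show (P[|C]) B = P[B|C] from rfl, cond_apply hC, cond_apply hC, cond_apply hC] at h
  have h' := congrArg ENNReal.toReal h
  rw [ENNReal.toReal_mul, ENNReal.toReal_mul, ENNReal.toReal_mul, ENNReal.toReal_mul,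
    ENNReal.toReal_inv] at h'
  have hc : (0:ℝ) < (P C).toReal := p_pos P C hC0
  have ha : (0:ℝ) < (P (C ∩ A)).toReal := p_pos P _ hA0
  field_simp at h' ⊢
  nlinarith [h', hc, ha]

/-- Splitting a set integral using independence of the indicator and the integrand. -/
lemma indic_integral_split (Q : Measure Ω) (S : Set Ω) (hS : MeasurableSet S)
    (Z : Ω → ℝ) (h : IndepFun (S.indicator fun _ => (1:ℝ)) Z Q)
    (hZ : AEStronglyMeasurable Z Q) :
    ∫ ω in S, Z ω ∂Q = (Q S).toReal * ∫ ω, Z ω ∂Q := by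
  have hind : AEStronglyMeasurable (S.indicator fun _ => (1:ℝ)) Q :=
    ((stronglyMeasurable_const.indicator hS)).aestronglyMeasurable
  have h1 := h.integral_mul_eq_mul_integral hind hZ
  have h2 : (S.indicator fun _ => (1:ℝ)) * Z = S.indicator Z := by
    funext ω
    simp [Set.indicator_apply, Pi.mul_apply]
    by_cases hω : ω ∈ S <;> simp [hω]
  rw [h2] at h1
  rw [integral_indicator hS] at h1
  rw [h1, integral_indicator_const (1:ℝ) hS]
  simp [mul_comm, Measure.real_def]

lemma setIntegral_cond (A S : Set Ω) (hS : MeasurableSet S) (Z : Ω → ℝ) :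
    ∫ ω in S, Z ω ∂(P[|A]) = ((P A)⁻¹).toReal * ∫ ω in S ∩ A, Z ω ∂P := by
  rw [show P[|A] = (P A)⁻¹ • P.restrict A from rfl]
  rw [Measure.restrict_smul, Measure.restrict_restrict hS, integral_smul_measure, smul_eq_mul]

end Aux

/-- Under experimental internal validity, short-term external validity,
latent unconfounding, consistency (observed outcomes are `Y1 (W ω) ω`, `Y2 (W ω) ω`) and
strict overlap, for each `w` the mean long-term potential outcome in the observational group
(`G = true`) is identified by the data-combination formula, and consequently the long-term
average treatment effect is identified as the difference of the two identified expressions. -/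
theorem long_term_ATE_identification
    {Ω : Type*} [MeasurableSpace Ω] (P : Measure Ω) [IsProbabilityMeasure P]
    {𝒳 𝒴 : Type*} [Fintype 𝒳] [Fintype 𝒴]
    [MeasurableSpace 𝒳] [MeasurableSingletonClass 𝒳]
    [MeasurableSpace 𝒴] [MeasurableSingletonClass 𝒴]
    (W G : Ω → Bool) (X : Ω → 𝒳) (Y1 : Bool → Ω → 𝒴) (Y2 : Bool → Ω → ℝ)
    (hW : Measurable W) (hG : Measurable G) (hX : Measurable X)
    (hY1 : ∀ w, Measurable (Y1 w)) (hY2 : ∀ w, Measurable (Y2 w))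
    (hY2int : ∀ w, Integrable (Y2 w) P)
    -- experimental internal validity
    (hIV : ∀ x : 𝒳, 0 < P ({ω | X ω = x} ∩ {ω | G ω = false}) →
      IndepFun W (fun ω => (Y2 true ω, Y2 false ω, Y1 true ω, Y1 false ω))
        (P[|{ω | X ω = x} ∩ {ω | G ω = false}]))
    -- short-term external validity
    (hEV : ∀ x : 𝒳, 0 < P {ω | X ω = x} →
      IndepFun G (fun ω => (Y1 true ω, Y1 false ω)) (P[|{ω | X ω = x}]))
    -- latent unconfounding
    (hLU : ∀ (w : Bool) (y : 𝒴) (x : 𝒳),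
      0 < P ({ω | Y1 w ω = y} ∩ {ω | X ω = x} ∩ {ω | G ω = true}) →
      IndepFun W (Y2 w) (P[|{ω | Y1 w ω = y} ∩ {ω | X ω = x} ∩ {ω | G ω = true}]))
    -- strict overlap: every conditioning event has positive probability
    (hG1 : 0 < P {ω | G ω = true})
    (hOv0 : ∀ (w : Bool) (x : 𝒳),
      0 < P ({ω | W ω = w} ∩ {ω | X ω = x} ∩ {ω | G ω = false}))
    (hOvX1 : ∀ x : 𝒳, 0 < P ({ω | X ω = x} ∩ {ω | G ω = true}))
    (hOv1 : ∀ (w : Bool) (y : 𝒴) (x : 𝒳),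
      0 < P ({ω | Y1 (W ω) ω = y} ∩ {ω | W ω = w} ∩ {ω | X ω = x} ∩ {ω | G ω = true}))
    (hLUpos : ∀ (w : Bool) (y : 𝒴) (x : 𝒳),
      0 < P ({ω | Y1 w ω = y} ∩ {ω | X ω = x} ∩ {ω | G ω = true})) :
    (∀ w : Bool,
      cE P (Y2 w) {ω | G ω = true} =
        ∑ x : 𝒳, cP P {ω | X ω = x} {ω | G ω = true} *
          ∑ y : 𝒴,
            cP P {ω | Y1 (W ω) ω = y}
              ({ω | W ω = w} ∩ {ω | X ω = x} ∩ {ω | G ω = false}) *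
            cE P (fun ω => Y2 (W ω) ω)
              ({ω | Y1 (W ω) ω = y} ∩ {ω | W ω = w} ∩ {ω | X ω = x} ∩ {ω | G ω = true}))
    ∧
    cE P (fun ω => Y2 true ω - Y2 false ω) {ω | G ω = true} =
      (∑ x : 𝒳, cP P {ω | X ω = x} {ω | G ω = true} *
        ∑ y : 𝒴,
          cP P {ω | Y1 (W ω) ω = y}
            ({ω | W ω = true} ∩ {ω | X ω = x} ∩ {ω | G ω = false}) *
          cE P (fun ω => Y2 (W ω) ω)
            ({ω | Y1 (W ω) ω = y} ∩ {ω | W ω = true} ∩ {ω | X ω = x} ∩ {ω | G ω = true}))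
      -
      (∑ x : 𝒳, cP P {ω | X ω = x} {ω | G ω = true} *
        ∑ y : 𝒴,
          cP P {ω | Y1 (W ω) ω = y}
            ({ω | W ω = false} ∩ {ω | X ω = x} ∩ {ω | G ω = false}) *
          cE P (fun ω => Y2 (W ω) ω)
            ({ω | Y1 (W ω) ω = y} ∩ {ω | W ω = false} ∩ {ω | X ω = x} ∩ {ω | G ω = true})) := by
  classical
  have hmG : ∀ g : Bool, MeasurableSet {ω | G ω = g} :=
    fun g => hG (measurableSet_singleton g)
  have hmW : ∀ w : Bool, MeasurableSet {ω | W ω = w} :=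
    fun w => hW (measurableSet_singleton w)
  have hmX : ∀ x : 𝒳, MeasurableSet {ω | X ω = x} :=
    fun x => hX (measurableSet_singleton x)
  have hmY : ∀ (w : Bool) (y : 𝒴), MeasurableSet {ω | Y1 w ω = y} :=
    fun w y => (hY1 w) (measurableSet_singleton y)
  -- The key identity, for each w
  have key : ∀ w : Bool,
      cE P (Y2 w) {ω | G ω = true} =
        ∑ x : 𝒳, cP P {ω | X ω = x} {ω | G ω = true} *
          ∑ y : 𝒴,
            cP P {ω | Y1 (W ω) ω = y}
              ({ω | W ω = w} ∩ {ω | X ω = x} ∩ {ω | G ω = false}) *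
            cE P (fun ω => Y2 (W ω) ω)
              ({ω | Y1 (W ω) ω = y} ∩ {ω | W ω = w} ∩ {ω | X ω = x} ∩ {ω | G ω = true}) := by
    intro w
    rw [partition_cE P X hX (Y2 w) (hY2int w) _ (hmG true) hG1.ne']
    refine Finset.sum_congr rfl fun x _ => ?_
    congr 1
    rw [partition_cE P (Y1 w) (hY1 w) (Y2 w) (hY2int w) ({ω | X ω = x} ∩ {ω | G ω = true})
      ((hmX x).inter (hmG true)) (hOvX1 x).ne']
    refine Finset.sum_congr rfl fun y _ => ?_
    -- positivity facts
    have hC0pos : 0 < P ({ω | X ω = x} ∩ {ω | G ω = false}) :=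
      lt_of_lt_of_le (hOv0 w x) (measure_mono (by intro ω; rintro ⟨⟨h1, h2⟩, h3⟩; exact ⟨h2, h3⟩))
    have hXpos : 0 < P {ω | X ω = x} :=
      lt_of_lt_of_le (hOvX1 x) (measure_mono (by intro ω; rintro ⟨h1, h2⟩; exact h1))
    -- (a) : the probability factor
    have ha : cP P {ω | Y1 w ω = y} ({ω | X ω = x} ∩ {ω | G ω = true})
        = cP P {ω | Y1 (W ω) ω = y}
            ({ω | W ω = w} ∩ {ω | X ω = x} ∩ {ω | G ω = false}) := by
      -- internal validity ratio
      have hT : (fun ω => (Y2 true ω, Y2 false ω, Y1 true ω, Y1 false ω)) ⁻¹'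
          {p : ℝ × ℝ × 𝒴 × 𝒴 | (bif w then p.2.2.1 else p.2.2.2) = y} = {ω | Y1 w ω = y} := by
        cases w <;> rfl
      have hTm : MeasurableSet {p : ℝ × ℝ × 𝒴 × 𝒴 | (bif w then p.2.2.1 else p.2.2.2) = y} := by
        cases w
        · exact (measurable_snd.comp (measurable_snd.comp measurable_snd))
            (measurableSet_singleton y)
        · exact (measurable_fst.comp (measurable_snd.comp measurable_snd))
            (measurableSet_singleton y)
      have hiv := (hIV x hC0pos).measure_inter_preimage_eq_mul {w}
        {p : ℝ × ℝ × 𝒴 × 𝒴 | (bif w then p.2.2.1 else p.2.2.2) = y}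
        (measurableSet_singleton w) hTm
      rw [hT, show W ⁻¹' {w} = {ω | W ω = w} from rfl] at hiv
      have r1 := indep_ratio P ({ω | X ω = x} ∩ {ω | G ω = false}) {ω | W ω = w}
        {ω | Y1 w ω = y} ((hmX x).inter (hmG false)) hC0pos hiv
        (by
          refine lt_of_lt_of_le (hOv0 w x) (measure_mono ?_)
          intro ω; rintro ⟨⟨h1, h2⟩, h3⟩; exact ⟨⟨h2, h3⟩, h1⟩)
      -- external validity ratios
      have hS : ∀ g : Bool, (fun ω => (Y1 true ω, Y1 false ω)) ⁻¹'
          {p : 𝒴 × 𝒴 | (bif w then p.1 else p.2) = y} = {ω | Y1 w ω = y} := by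
        intro g; cases w <;> rfl
      have hSm : MeasurableSet {p : 𝒴 × 𝒴 | (bif w then p.1 else p.2) = y} := by
        cases w
        · exact measurable_snd (measurableSet_singleton y)
        · exact measurable_fst (measurableSet_singleton y)
      have hev : ∀ g : Bool, (P[|{ω | X ω = x}]) ({ω | G ω = g} ∩ {ω | Y1 w ω = y})
          = (P[|{ω | X ω = x}]) {ω | G ω = g} * (P[|{ω | X ω = x}]) {ω | Y1 w ω = y} := by
        intro g
        have h := (hEV x hXpos).measure_inter_preimage_eq_mul {g}
          {p : 𝒴 × 𝒴 | (bif w then p.1 else p.2) = y} (measurableSet_singleton g) hSm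
        rw [hS g, show G ⁻¹' {g} = {ω | G ω = g} from rfl] at h
        exact h
      have r2 := indep_ratio P {ω | X ω = x} {ω | G ω = false} {ω | Y1 w ω = y}
        (hmX x) hXpos (hev false)
        (by
          refine lt_of_lt_of_le hC0pos (measure_mono ?_)
          intro ω h; exact h)
      have r3 := indep_ratio P {ω | X ω = x} {ω | G ω = true} {ω | Y1 w ω = y}
        (hmX x) hXpos (hev true)
        (by
          refine lt_of_lt_of_le (hOvX1 x) (measure_mono ?_)
          intro ω h; exact h)
      -- set rewrites
      have s1 : ({ω | W ω = w} ∩ {ω | X ω = x} ∩ {ω | G ω = false}) ∩ {ω | Y1 (W ω) ω = y}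
          = ({ω | X ω = x} ∩ {ω | G ω = false}) ∩ ({ω | W ω = w} ∩ {ω | Y1 w ω = y}) := by
        ext ω
        simp only [Set.mem_inter_iff, Set.mem_setOf_eq]
        constructor
        · rintro ⟨⟨⟨hw, hx⟩, hg⟩, hy⟩
          rw [hw] at hy
          exact ⟨⟨hx, hg⟩, hw, hy⟩
        · rintro ⟨⟨hx, hg⟩, hw, hy⟩
          exact ⟨⟨⟨hw, hx⟩, hg⟩, by rw [hw]; exact hy⟩
      have s2 : {ω | W ω = w} ∩ {ω | X ω = x} ∩ {ω | G ω = false}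
          = ({ω | X ω = x} ∩ {ω | G ω = false}) ∩ {ω | W ω = w} := by
        ext ω
        simp only [Set.mem_inter_iff, Set.mem_setOf_eq]
        tauto
      have s3 : ({ω | X ω = x} ∩ {ω | G ω = false}) ∩ {ω | Y1 w ω = y}
          = {ω | X ω = x} ∩ ({ω | G ω = false} ∩ {ω | Y1 w ω = y}) := Set.inter_assoc _ _ _
      have s4 : ({ω | X ω = x} ∩ {ω | G ω = true}) ∩ {ω | Y1 w ω = y}
          = {ω | X ω = x} ∩ ({ω | G ω = true} ∩ {ω | Y1 w ω = y}) := Set.inter_assoc _ _ _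
      rw [cP_eq P _ _ ((hmX x).inter (hmG true)),
        cP_eq P _ _ (((hmW w).inter (hmX x)).inter (hmG false))]
      calc (P (({ω | X ω = x} ∩ {ω | G ω = true}) ∩ {ω | Y1 w ω = y})).toReal /
              (P ({ω | X ω = x} ∩ {ω | G ω = true})).toReal
          = (P ({ω | X ω = x} ∩ ({ω | G ω = true} ∩ {ω | Y1 w ω = y}))).toReal /
              (P ({ω | X ω = x} ∩ {ω | G ω = true})).toReal := by rw [s4]
        _ = (P ({ω | X ω = x} ∩ {ω | Y1 w ω = y})).toReal / (P {ω | X ω = x}).toReal := r3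
        _ = (P ({ω | X ω = x} ∩ ({ω | G ω = false} ∩ {ω | Y1 w ω = y}))).toReal /
              (P ({ω | X ω = x} ∩ {ω | G ω = false})).toReal := r2.symm
        _ = (P (({ω | X ω = x} ∩ {ω | G ω = false}) ∩ ({ω | W ω = w} ∩ {ω | Y1 w ω = y}))).toReal /
              (P (({ω | X ω = x} ∩ {ω | G ω = false}) ∩ {ω | W ω = w})).toReal := by
            rw [r1, s3]
        _ = (P (({ω | W ω = w} ∩ {ω | X ω = x} ∩ {ω | G ω = false}) ∩ {ω | Y1 (W ω) ω = y})).toReal /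
              (P ({ω | W ω = w} ∩ {ω | X ω = x} ∩ {ω | G ω = false})).toReal := by
            rw [s1, s2]
    -- (b) : the expectation factor
    have hb : cE P (Y2 w) ({ω | Y1 w ω = y} ∩ ({ω | X ω = x} ∩ {ω | G ω = true}))
        = cE P (fun ω => Y2 (W ω) ω)
            ({ω | Y1 (W ω) ω = y} ∩ {ω | W ω = w} ∩ {ω | X ω = x} ∩ {ω | G ω = true}) := by
      set Aset := {ω | Y1 w ω = y} ∩ {ω | X ω = x} ∩ {ω | G ω = true} with hAdef
      have hAm : MeasurableSet Aset := ((hmY w y).inter (hmX x)).inter (hmG true)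
      have hA0 : 0 < P Aset := hLUpos w y x
      have sE : {ω | Y1 (W ω) ω = y} ∩ {ω | W ω = w} ∩ {ω | X ω = x} ∩ {ω | G ω = true}
          = {ω | W ω = w} ∩ Aset := by
        rw [hAdef]
        ext ω
        simp only [Set.mem_inter_iff, Set.mem_setOf_eq]
        constructor
        · rintro ⟨⟨⟨hy, hw⟩, hx⟩, hg⟩
          rw [hw] at hy
          exact ⟨hw, ⟨hy, hx⟩, hg⟩
        · rintro ⟨hw, ⟨hy, hx⟩, hg⟩
          exact ⟨⟨⟨by rw [hw]; exact hy, hw⟩, hx⟩, hg⟩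
      have sA : {ω | Y1 w ω = y} ∩ ({ω | X ω = x} ∩ {ω | G ω = true}) = Aset :=
        (Set.inter_assoc _ _ _).symm
      have hSApos : 0 < P ({ω | W ω = w} ∩ Aset) := by
        rw [← sE]; exact hOv1 w y x
      -- independence of the indicator of {W = w} and Y2 w under P[|Aset]
      have hφ : ({ω | W ω = w}).indicator (fun _ => (1:ℝ))
          = (fun b => if b = w then (1:ℝ) else 0) ∘ W := by
        funext ω
        simp [Set.indicator_apply]
      have hφm : Measurable (fun b : Bool => if b = w then (1:ℝ) else 0) :=
        Measurable.of_discrete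
      have hInd2 : IndepFun (({ω | W ω = w}).indicator fun _ => (1:ℝ)) (Y2 w) (P[|Aset]) := by
        rw [hφ]
        exact (hLU w y x hA0).comp hφm measurable_id
      have hsplit := indic_integral_split (P[|Aset]) {ω | W ω = w} (hmW w) (Y2 w) hInd2
        (hY2 w).aestronglyMeasurable
      rw [setIntegral_cond P Aset {ω | W ω = w} (hmW w), cond_apply hAm,
        show ∫ ω, Y2 w ω ∂(P[|Aset]) = cE P (Y2 w) Aset from rfl, cE_eq P (Y2 w) Aset,
        ENNReal.toReal_mul, ENNReal.toReal_inv] at hsplit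
      have haR : (0:ℝ) < (P Aset).toReal := p_pos P Aset hA0
      have hcR : (0:ℝ) < (P (Aset ∩ {ω | W ω = w})).toReal := by
        rw [Set.inter_comm]; exact p_pos P _ hSApos
      have hIS : ∫ ω in {ω | W ω = w} ∩ Aset, Y2 w ω ∂P
          = (P (Aset ∩ {ω | W ω = w})).toReal *
              ((∫ ω in Aset, Y2 w ω ∂P) / (P Aset).toReal) :=
        mul_left_cancel₀ (inv_ne_zero haR.ne') (hsplit.trans (mul_assoc _ _ _))
      rw [sA, sE, cE_eq P (Y2 w) Aset]
      have hcongr : ∫ ω in {ω | W ω = w} ∩ Aset, (fun ω => Y2 (W ω) ω) ω ∂P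
          = ∫ ω in {ω | W ω = w} ∩ Aset, Y2 w ω ∂P := by
        refine setIntegral_congr_fun ((hmW w).inter hAm) ?_
        intro ω hω
        have hw : W ω = w := hω.1
        simp only
        rw [hw]
      have hcR' : (P ({ω | W ω = w} ∩ Aset)).toReal ≠ 0 := by
        rw [Set.inter_comm]; exact hcR.ne'
      rw [cE_eq, hcongr, hIS, Set.inter_comm Aset {ω | W ω = w}, mul_div_assoc,
        mul_comm, div_mul_cancel₀ _ hcR']
    rw [← ha, ← hb]
  refine ⟨key, ?_⟩
  -- ATE part
  have hint : ∀ w : Bool, Integrable (Y2 w) (P[|{ω | G ω = true}]) := by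
    intro w
    rw [show P[|{ω | G ω = true}] = (P {ω | G ω = true})⁻¹ • P.restrict {ω | G ω = true} from rfl]
    exact ((hY2int w).restrict).smul_measure (by
      simp [ENNReal.inv_ne_top, hG1.ne'])
  have hsub : cE P (fun ω => Y2 true ω - Y2 false ω) {ω | G ω = true}
      = cE P (Y2 true) {ω | G ω = true} - cE P (Y2 false) {ω | G ω = true} := by
    unfold cE
    exact integral_sub (hint true) (hint false)
  rw [hsub, key true, key false]
end

section
/- (ATETS reduces to the long-term ATE under no state dependence.) Let Y1(1), Y1(0) be {0,1}-valued and Y2(1), Y2(0) integrable real-valued random variables, and G a {0,1}-valued random variable with P(Y1(1)=0, G=1) > 0. If, under the conditional measure P(· | G=1), the pair (Y2(1), Y2(0)) is independent of the pair (Y1(1), Y1(0)), then the average treatment effect on the treated survivors equals the long-term average treatment effect in the observational population: E[Y2(1) | Y1(1)=0, G=1] − E[Y2(0) | Y1(1)=0, G=1] = E[Y2(1) | G=1] − E[Y2(0) | G=1]. -/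
open MeasureTheory ProbabilityTheory

/-- If `Y` is independent of the indicator of `E`, then conditioning on `E` does not change
the expectation of `Y`. -/
lemma integral_cond_of_indepFun_indicator {Ω : Type*} [MeasurableSpace Ω]
    (μ : Measure Ω) [IsProbabilityMeasure μ] (Y : Ω → ℝ) (hY : Integrable Y μ)
    (E : Set Ω) (hE : MeasurableSet E) (h0 : μ E ≠ 0)
    (hind : IndepFun Y (E.indicator (fun _ => (1 : ℝ))) μ) :
    ∫ ω, Y ω ∂(μ[|E]) = ∫ ω, Y ω ∂μ := by
  have hindint : Integrable (E.indicator (fun _ => (1 : ℝ))) μ :=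
    (integrable_const (1 : ℝ)).indicator hE
  have hmul : ∫ ω, Y ω * E.indicator (fun _ => (1 : ℝ)) ω ∂μ
      = (∫ ω, Y ω ∂μ) * ∫ ω, E.indicator (fun _ => (1 : ℝ)) ω ∂μ :=
    hind.integral_fun_mul_eq_mul_integral hY.aestronglyMeasurable hindint.aestronglyMeasurable
  have h1 : (fun ω => Y ω * E.indicator (fun _ => (1 : ℝ)) ω) = E.indicator Y := by
    funext ω
    by_cases h : ω ∈ E <;> simp [Set.indicator, h]
  have h2 : ∫ ω, E.indicator (fun _ => (1 : ℝ)) ω ∂μ = (μ E).toReal := by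
    rw [integral_indicator hE]; simp; rfl
  rw [h1, integral_indicator hE, h2] at hmul
  have htop : μ E ≠ ⊤ := measure_ne_top μ E
  have htolt : (μ E).toReal ≠ 0 := ENNReal.toReal_ne_zero.mpr ⟨h0, htop⟩
  rw [ProbabilityTheory.cond, integral_smul_measure]
  have : ∫ ω, Y ω ∂(μ.restrict E) = ∫ ω in E, Y ω ∂μ := rfl
  rw [this, hmul, ENNReal.toReal_inv, smul_eq_mul]
  field_simp

/-- Under the (strong) no-state-dependence assumption — independence of
`(Y2(1), Y2(0))` and `(Y1(1), Y1(0))` under `P(·|G=1)` — the average treatment effect on the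
treated survivors equals the long-term average treatment effect in the observational
population. -/
theorem ATETS_eq_LTATE_of_no_state_dependence
    {Ω : Type*} [MeasurableSpace Ω] (P : Measure Ω) [IsProbabilityMeasure P]
    (G : Ω → Bool) (Y1 : Bool → Ω → Bool) (Y2 : Bool → Ω → ℝ)
    (hG : Measurable G) (hY1 : ∀ w, Measurable (Y1 w)) (hY2 : ∀ w, Measurable (Y2 w))
    (hY2int : ∀ w, Integrable (Y2 w) P)
    (hpos : 0 < P ({ω | Y1 true ω = false} ∩ {ω | G ω = true}))
    (hNSD : IndepFun (fun ω => (Y2 true ω, Y2 false ω))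
      (fun ω => (Y1 true ω, Y1 false ω)) (P[|{ω | G ω = true}])) :
    cE P (Y2 true) ({ω | Y1 true ω = false} ∩ {ω | G ω = true}) -
      cE P (Y2 false) ({ω | Y1 true ω = false} ∩ {ω | G ω = true}) =
    cE P (Y2 true) {ω | G ω = true} - cE P (Y2 false) {ω | G ω = true} := by
  set A : Set Ω := {ω | Y1 true ω = false}
  set B : Set Ω := {ω | G ω = true}
  have hA : MeasurableSet A := (hY1 true) (measurableSet_singleton false)
  have hB : MeasurableSet B := hG (measurableSet_singleton true)
  have hBpos : P B ≠ 0 := by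
    intro h
    have := measure_mono (μ := P) (Set.inter_subset_right : A ∩ B ⊆ B)
    rw [h] at this
    exact absurd (le_antisymm this zero_le) (by simpa using hpos.ne')
  set μ : Measure Ω := P[|B] with hμdef
  haveI : IsProbabilityMeasure μ := cond_isProbabilityMeasure hBpos
  have hμA : μ A ≠ 0 := by
    rw [hμdef, cond_apply hB]
    refine mul_ne_zero (ENNReal.inv_ne_zero.mpr (measure_ne_top P B)) ?_
    rw [Set.inter_comm]
    exact hpos.ne'
  have hμint : ∀ w, Integrable (Y2 w) μ := fun w => by
    rw [hμdef, ProbabilityTheory.cond]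
    exact ((hY2int w).restrict).smul_measure (ENNReal.inv_ne_top.mpr hBpos)
  -- independence of each Y2 w with the indicator of A under μ
  have hind : ∀ w, IndepFun (Y2 w) (A.indicator (fun _ => (1 : ℝ))) μ := by
    intro w
    have hφ : Measurable (fun p : ℝ × ℝ => if w = true then p.1 else p.2) := by
      by_cases hw : w = true <;> simp [hw] <;> measurability
    have hψ : Measurable (fun p : Bool × Bool => if p.1 = false then (1 : ℝ) else 0) := by
      have : Measurable (fun b : Bool => if b = false then (1 : ℝ) else 0) :=
        measurable_from_top
      exact this.comp measurable_fst
    have := hNSD.comp hφ hψ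
    have h1 : (fun ω => (fun p : ℝ × ℝ => if w = true then p.1 else p.2)
        ((Y2 true ω, Y2 false ω))) = Y2 w := by
      funext ω; cases w <;> simp
    have h2 : (fun ω => (fun p : Bool × Bool => if p.1 = false then (1 : ℝ) else 0)
        ((Y1 true ω, Y1 false ω))) = A.indicator (fun _ => (1 : ℝ)) := by
      funext ω
      by_cases h : Y1 true ω = false <;> simp [Set.indicator, A, h]
    rwa [Function.comp_def, Function.comp_def, h1, h2] at this
  have key : ∀ w, cE P (Y2 w) (A ∩ B) = cE P (Y2 w) B := by
    intro w
    have hcc : P[|B][|A] = P[|B ∩ A] := cond_cond_eq_cond_inter hB hA P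
    have : cE P (Y2 w) (A ∩ B) = ∫ ω, Y2 w ω ∂(μ[|A]) := by
      rw [cE, Set.inter_comm, ← hcc, hμdef]
    rw [this]
    exact integral_cond_of_indepFun_indicator μ (Y2 w) (hμint w) A hA hμA (hind w)
  rw [key true, key false]
end

section
/- (Nonparametric identification of ATETS under no state dependence.) In the discrete data-combination setup, assume experimental internal validity, external validity, latent unconfounding, consistency, strict overlap, and the no-state-dependence assumption that under P(· | G=1) the pair (Y2(1),Y2(0)) is independent of (Y1(1),Y1(0)). Then, provided P(Y1(1)=0, G=1) > 0, the average treatment effect on the treated survivors is identified: E[Y2(1) | Y1(1)=0, G=1] − E[Y2(0) | Y1(1)=0, G=1] = Σ_{x} P(X=x | G=1) [ Σ_{y} P(Y1=y | W=1, X=x, G=0) E[Y2 | Y1=y, W=1, X=x, G=1] − Σ_{y} P(Y1=y | W=0, X=x, G=0) E[Y2 | Y1=y, W=0, X=x, G=1] ]. -/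
open MeasureTheory ProbabilityTheory

section helpers
variable {Ω : Type*} [MeasurableSpace Ω]

lemma integrable_cond {P : Measure Ω} [IsFiniteMeasure P] {f : Ω → ℝ}
    (hf : Integrable f P) {B : Set Ω} (hB : P B ≠ 0) : Integrable f (P[|B]) := by
  rw [ProbabilityTheory.cond]
  exact (hf.restrict).smul_measure (ENNReal.inv_ne_top.mpr hB)

lemma cond_pos_of_inter {P : Measure Ω} [IsFiniteMeasure P] {A B : Set Ω}
    (hB : MeasurableSet B) (h : P (B ∩ A) ≠ 0) : (P[|B]) A ≠ 0 := by
  rw [cond_apply hB]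
  exact mul_ne_zero (ENNReal.inv_ne_zero.mpr (measure_ne_top P B)) h

lemma cE_mul' (P : Measure Ω) [IsFiniteMeasure P] (f : Ω → ℝ) (B : Set Ω) :
    (P B).toReal * ∫ ω, f ω ∂(P[|B]) = ∫ ω in B, f ω ∂P := by
  rw [ProbabilityTheory.cond, integral_smul_measure]
  by_cases h : P B = 0
  · rw [h, Measure.restrict_eq_zero.mpr h]
    simp
  · rw [ENNReal.toReal_inv, smul_eq_mul, ← mul_assoc,
      mul_inv_cancel₀ (ENNReal.toReal_ne_zero.mpr ⟨h, measure_ne_top P B⟩), one_mul]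

/-- Law of total expectation over a finite partition, as conditional expectations. -/
lemma integral_eq_sum_cond {β : Type*} [Fintype β] [MeasurableSpace β]
    [MeasurableSingletonClass β] (ν : Measure Ω) [IsFiniteMeasure ν] {f : Ω → ℝ}
    (hf : Integrable f ν) {T : Ω → β} (hT : Measurable T) :
    ∫ ω, f ω ∂ν = ∑ b, (ν (T ⁻¹' {b})).toReal * ∫ ω, f ω ∂(ν[|T ⁻¹' {b}]) := by
  have hU : (⋃ b, T ⁻¹' {b}) = Set.univ := by ext ω; simp
  have h1 : ∫ ω, f ω ∂ν = ∑ b, ∫ ω in T ⁻¹' {b}, f ω ∂ν := by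
    rw [← setIntegral_univ, ← hU]
    exact integral_iUnion_fintype (fun b => hT (measurableSet_singleton b))
      (fun b b' hbb' => Set.disjoint_left.mpr (fun ω hb hb' =>
        hbb' ((Set.mem_singleton_iff.mp hb).symm.trans (Set.mem_singleton_iff.mp hb'))))
      (fun b => hf.integrableOn)
  rw [h1]
  exact Finset.sum_congr rfl fun b _ => (cE_mul' ν f _).symm

/-- Conditioning on an independent event does not change the integral. -/
lemma integral_cond_of_indep {β : Type*} [MeasurableSpace β] (ν : Measure Ω)
    [IsProbabilityMeasure ν] {f : Ω → ℝ} {T : Ω → β} (hT : Measurable T)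
    (hf : Integrable f ν) (hind : IndepFun f T ν) {E : Set β} (hE : MeasurableSet E)
    (hpos : ν (T ⁻¹' E) ≠ 0) :
    ∫ ω, f ω ∂(ν[|T ⁻¹' E]) = ∫ ω, f ω ∂ν := by
  have hB : MeasurableSet (T ⁻¹' E) := hT hE
  have hind' : IndepFun f ((E.indicator (fun _ => (1 : ℝ))) ∘ T) ν :=
    hind.comp measurable_id (measurable_const.indicator hE)
  have hint : Integrable ((E.indicator (fun _ => (1 : ℝ))) ∘ T) ν := by
    have : (E.indicator (fun _ => (1 : ℝ))) ∘ T = (T ⁻¹' E).indicator (fun _ => (1 : ℝ)) := by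
      ext ω; by_cases h : T ω ∈ E <;> simp [Set.indicator, h]
    rw [this]
    exact (integrable_const (1 : ℝ)).indicator hB
  have hmul := hind'.integral_mul_eq_mul_integral hf.aestronglyMeasurable hint.aestronglyMeasurable
  have hkey : ∫ ω in T ⁻¹' E, f ω ∂ν = (∫ ω, f ω ∂ν) * (ν (T ⁻¹' E)).toReal := by
    have e1 : ∀ ω, f ω * (E.indicator (fun _ => (1 : ℝ))) (T ω)
        = (T ⁻¹' E).indicator f ω := by
      intro ω; by_cases h : T ω ∈ E <;> simp [Set.indicator, h]
    calc ∫ ω in T ⁻¹' E, f ω ∂ν = ∫ ω, (T ⁻¹' E).indicator f ω ∂ν :=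
          (integral_indicator hB).symm
      _ = ∫ ω, f ω * (E.indicator (fun _ => (1 : ℝ))) (T ω) ∂ν := by
          simp_rw [e1]
      _ = (∫ ω, f ω ∂ν) * ∫ ω, (E.indicator (fun _ => (1 : ℝ))) (T ω) ∂ν := hmul
      _ = (∫ ω, f ω ∂ν) * (ν (T ⁻¹' E)).toReal := by
          congr 1
          have : ∀ ω, (E.indicator (fun _ => (1 : ℝ))) (T ω)
              = (T ⁻¹' E).indicator (fun _ => (1 : ℝ)) ω := by
            intro ω; by_cases h : T ω ∈ E <;> simp [Set.indicator, h]
          simp_rw [this]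
          rw [integral_indicator hB]
          simp
          rfl
  have h0 : (ν (T ⁻¹' E)).toReal ≠ 0 :=
    ENNReal.toReal_ne_zero.mpr ⟨hpos, measure_ne_top ν _⟩
  have := cE_mul' ν f (T ⁻¹' E)
  rw [hkey, mul_comm] at this
  exact mul_right_cancel₀ h0 this

/-- Conditioning on an independent event does not change probabilities. -/
lemma cond_of_indep {β γ : Type*} [MeasurableSpace β] [MeasurableSpace γ]
    (ν : Measure Ω) [IsProbabilityMeasure ν] {S : Ω → β} {T : Ω → γ}
    (hT : Measurable T) (hind : IndepFun S T ν) {F : Set β} {E : Set γ}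
    (hF : MeasurableSet F) (hE : MeasurableSet E) (hpos : ν (T ⁻¹' E) ≠ 0) :
    (ν[|T ⁻¹' E]) (S ⁻¹' F) = ν (S ⁻¹' F) := by
  rw [cond_apply (hT hE), Set.inter_comm,
    hind.measure_inter_preimage_eq_mul F E hF hE, ← mul_assoc, mul_comm ((ν (T ⁻¹' E))⁻¹),
    mul_assoc, ENNReal.inv_mul_cancel hpos (measure_ne_top ν _), mul_one]

lemma integral_cond_congr_on {P : Measure Ω} {f g : Ω → ℝ} {A : Set Ω} (hA : MeasurableSet A)
    (h : ∀ ω ∈ A, f ω = g ω) : ∫ ω, f ω ∂(P[|A]) = ∫ ω, g ω ∂(P[|A]) := by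
  rw [ProbabilityTheory.cond, integral_smul_measure, integral_smul_measure]
  congr 1
  exact setIntegral_congr_fun hA fun ω hω => h ω hω

end helpers

set_option maxHeartbeats 2000000 in
/-- Nonparametric identification of the average treatment effect on the
treated survivors (ATETS) in the discrete data-combination setup, under experimental internal
validity, external validity, latent unconfounding, consistency, strict overlap, and the
no-state-dependence assumption. -/
theorem ATETS_identification_no_state_dependence
    {Ω : Type*} [MeasurableSpace Ω] (P : Measure Ω) [IsProbabilityMeasure P]
    {𝒳 : Type*} [Fintype 𝒳] [MeasurableSpace 𝒳] [MeasurableSingletonClass 𝒳]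
    (W G : Ω → Bool) (X : Ω → 𝒳) (Y1 : Bool → Ω → Bool) (Y2 : Bool → Ω → ℝ)
    (hW : Measurable W) (hG : Measurable G) (hX : Measurable X)
    (hY1 : ∀ w, Measurable (Y1 w)) (hY2 : ∀ w, Measurable (Y2 w))
    (hY2int : ∀ w, Integrable (Y2 w) P)
    -- experimental internal validity
    (hIV : ∀ x : 𝒳, 0 < P ({ω | X ω = x} ∩ {ω | G ω = false}) →
      IndepFun W (fun ω => (Y2 true ω, Y2 false ω, Y1 true ω, Y1 false ω))
        (P[|{ω | X ω = x} ∩ {ω | G ω = false}]))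
    -- external validity
    (hEV : ∀ x : 𝒳, 0 < P {ω | X ω = x} →
      IndepFun G (fun ω => (Y2 true ω, Y2 false ω, Y1 true ω, Y1 false ω))
        (P[|{ω | X ω = x}]))
    -- latent unconfounding
    (hLU : ∀ (w : Bool) (y : Bool) (x : 𝒳),
      0 < P ({ω | Y1 w ω = y} ∩ {ω | X ω = x} ∩ {ω | G ω = true}) →
      IndepFun W (Y2 w) (P[|{ω | Y1 w ω = y} ∩ {ω | X ω = x} ∩ {ω | G ω = true}]))
    -- no state dependence under the observational conditional measure
    (hNSD : IndepFun (fun ω => (Y2 true ω, Y2 false ω))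
      (fun ω => (Y1 true ω, Y1 false ω)) (P[|{ω | G ω = true}]))
    -- strict overlap: every conditioning event has positive probability
    (hG1 : 0 < P {ω | G ω = true})
    (hSurv : 0 < P ({ω | Y1 true ω = false} ∩ {ω | G ω = true}))
    (hOv0 : ∀ (w : Bool) (x : 𝒳),
      0 < P ({ω | W ω = w} ∩ {ω | X ω = x} ∩ {ω | G ω = false}))
    (hOvX1 : ∀ x : 𝒳, 0 < P ({ω | X ω = x} ∩ {ω | G ω = true}))
    (hOv1 : ∀ (w : Bool) (y : Bool) (x : 𝒳),
      0 < P ({ω | Y1 (W ω) ω = y} ∩ {ω | W ω = w} ∩ {ω | X ω = x} ∩ {ω | G ω = true}))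
    (hLUpos : ∀ (w : Bool) (y : Bool) (x : 𝒳),
      0 < P ({ω | Y1 w ω = y} ∩ {ω | X ω = x} ∩ {ω | G ω = true})) :
    cE P (Y2 true) ({ω | Y1 true ω = false} ∩ {ω | G ω = true}) -
      cE P (Y2 false) ({ω | Y1 true ω = false} ∩ {ω | G ω = true}) =
    ∑ x : 𝒳, cP P {ω | X ω = x} {ω | G ω = true} *
      ((∑ y : Bool,
          cP P {ω | Y1 (W ω) ω = y}
            ({ω | W ω = true} ∩ {ω | X ω = x} ∩ {ω | G ω = false}) *
          cE P (fun ω => Y2 (W ω) ω)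
            ({ω | Y1 (W ω) ω = y} ∩ {ω | W ω = true} ∩ {ω | X ω = x} ∩ {ω | G ω = true})) -
        (∑ y : Bool,
          cP P {ω | Y1 (W ω) ω = y}
            ({ω | W ω = false} ∩ {ω | X ω = x} ∩ {ω | G ω = false}) *
          cE P (fun ω => Y2 (W ω) ω)
            ({ω | Y1 (W ω) ω = y} ∩ {ω | W ω = false} ∩ {ω | X ω = x} ∩ {ω | G ω = true}))) := by
  classical
  have mGt : MeasurableSet {ω | G ω = true} := hG (measurableSet_singleton true)
  have mGf : MeasurableSet {ω | G ω = false} := hG (measurableSet_singleton false)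
  have mX : ∀ x : 𝒳, MeasurableSet {ω | X ω = x} := fun x => hX (measurableSet_singleton x)
  have mY1 : ∀ w y, MeasurableSet {ω | Y1 w ω = y} := fun w y => hY1 w (measurableSet_singleton y)
  have mW : ∀ w, MeasurableSet {ω | W ω = w} := fun w => hW (measurableSet_singleton w)
  have key : ∀ w : Bool,
      cE P (Y2 w) ({ω | Y1 true ω = false} ∩ {ω | G ω = true}) =
      ∑ x : 𝒳, cP P {ω | X ω = x} {ω | G ω = true} *
        ∑ y : Bool,
          cP P {ω | Y1 (W ω) ω = y}
            ({ω | W ω = w} ∩ {ω | X ω = x} ∩ {ω | G ω = false}) *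
          cE P (fun ω => Y2 (W ω) ω)
            ({ω | Y1 (W ω) ω = y} ∩ {ω | W ω = w} ∩ {ω | X ω = x} ∩ {ω | G ω = true}) := by
    intro w
    haveI hPG : IsProbabilityMeasure (P[|{ω | G ω = true}]) :=
      cond_isProbabilityMeasure hG1.ne'
    have hfintG : Integrable (Y2 w) (P[|{ω | G ω = true}]) :=
      integrable_cond (hY2int w) hG1.ne'
    -- Step 1: drop the survival conditioning using no state dependence
    have step1 : cE P (Y2 w) ({ω | Y1 true ω = false} ∩ {ω | G ω = true}) =
        ∫ ω, Y2 w ω ∂(P[|{ω | G ω = true}]) := by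
      have hTmeas : Measurable (fun ω => (Y1 true ω, Y1 false ω)) :=
        (hY1 true).prodMk (hY1 false)
      have hindf : IndepFun (Y2 w) (fun ω => (Y1 true ω, Y1 false ω))
          (P[|{ω | G ω = true}]) := by
        cases w
        · exact hNSD.comp measurable_snd measurable_id
        · exact hNSD.comp measurable_fst measurable_id
      have hposS : (P[|{ω | G ω = true}])
          ((fun ω => (Y1 true ω, Y1 false ω)) ⁻¹' (Prod.fst ⁻¹' {false})) ≠ 0 := by
        apply cond_pos_of_inter mGt
        rw [show ((fun ω => (Y1 true ω, Y1 false ω)) ⁻¹' (Prod.fst ⁻¹' {false}) : Set Ω)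
          = {ω | Y1 true ω = false} from rfl, Set.inter_comm]
        exact hSurv.ne'
      have h1 : {ω | Y1 true ω = false} ∩ {ω | G ω = true}
          = {ω | G ω = true} ∩ {ω | Y1 true ω = false} := Set.inter_comm _ _
      rw [cE, h1, ← cond_cond_eq_cond_inter mGt (mY1 true false) P,
        show ({ω | Y1 true ω = false} : Set Ω)
          = (fun ω => (Y1 true ω, Y1 false ω)) ⁻¹' (Prod.fst ⁻¹' {false}) from rfl]
      exact integral_cond_of_indep _ hTmeas hfintG hindf
        (measurable_fst (measurableSet_singleton false)) hposS
    rw [step1, integral_eq_sum_cond _ hfintG hX]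
    refine Finset.sum_congr rfl fun x _ => ?_
    -- per-x step
    have hXpos : P {ω | X ω = x} ≠ 0 :=
      (lt_of_lt_of_le (hOvX1 x) (measure_mono Set.inter_subset_left)).ne'
    have hXGf : P ({ω | X ω = x} ∩ {ω | G ω = false}) ≠ 0 :=
      (lt_of_lt_of_le (hOv0 w x)
        (measure_mono (Set.inter_subset_inter_left _ Set.inter_subset_right))).ne'
    haveI hPX : IsProbabilityMeasure (P[|{ω | X ω = x}]) :=
      cond_isProbabilityMeasure hXpos
    haveI hPXGt : IsProbabilityMeasure (P[|{ω | X ω = x} ∩ {ω | G ω = true}]) :=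
      cond_isProbabilityMeasure (hOvX1 x).ne'
    haveI hPXGf : IsProbabilityMeasure (P[|{ω | X ω = x} ∩ {ω | G ω = false}]) :=
      cond_isProbabilityMeasure hXGf
    rw [show cP P {ω | X ω = x} {ω | G ω = true}
      = ((P[|{ω | G ω = true}]) (X ⁻¹' {x})).toReal from rfl]
    congr 1
    have hcond : (P[|{ω | G ω = true}])[|X ⁻¹' {x}]
        = P[|{ω | X ω = x} ∩ {ω | G ω = true}] := by
      rw [show (X ⁻¹' {x} : Set Ω) = {ω | X ω = x} from rfl,
        cond_cond_eq_cond_inter mGt (mX x) P, Set.inter_comm]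
    rw [hcond, integral_eq_sum_cond _ (integrable_cond (hY2int w) (hOvX1 x).ne') (hY1 w)]
    refine Finset.sum_congr rfl fun y _ => ?_
    -- per-(x,y) step
    have hWsetEq : ({ω | X ω = x} ∩ {ω | G ω = false}) ∩ {ω | W ω = w}
        = {ω | W ω = w} ∩ {ω | X ω = x} ∩ {ω | G ω = false} := by
      ext ω
      simp only [Set.mem_inter_iff, Set.mem_setOf_eq]
      tauto
    have hCsetEq : ({ω | X ω = x} ∩ {ω | G ω = true}) ∩ {ω | Y1 w ω = y}
        = {ω | Y1 w ω = y} ∩ {ω | X ω = x} ∩ {ω | G ω = true} := by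
      ext ω
      simp only [Set.mem_inter_iff, Set.mem_setOf_eq]
      tauto
    have hADeq : ({ω | Y1 w ω = y} ∩ {ω | X ω = x} ∩ {ω | G ω = true}) ∩ {ω | W ω = w}
        = {ω | Y1 (W ω) ω = y} ∩ {ω | W ω = w} ∩ {ω | X ω = x} ∩ {ω | G ω = true} := by
      ext ω
      simp only [Set.mem_inter_iff, Set.mem_setOf_eq]
      constructor
      · rintro ⟨⟨⟨h1, h2⟩, h3⟩, h4⟩
        exact ⟨⟨⟨by rw [h4]; exact h1, h4⟩, h2⟩, h3⟩
      · rintro ⟨⟨⟨h1, h2⟩, h3⟩, h4⟩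
        exact ⟨⟨⟨by rw [h2] at h1; exact h1, h3⟩, h4⟩, h2⟩
    -- independences transported to components
    have hY1w_G : IndepFun (Y1 w) G (P[|{ω | X ω = x}]) := by
      cases w
      · exact (hEV x (pos_iff_ne_zero.mpr hXpos)).symm.comp
          (measurable_snd.comp (measurable_snd.comp measurable_snd)) measurable_id
      · exact (hEV x (pos_iff_ne_zero.mpr hXpos)).symm.comp
          (measurable_fst.comp (measurable_snd.comp measurable_snd)) measurable_id
    have hY1w_W : IndepFun (Y1 w) W (P[|{ω | X ω = x} ∩ {ω | G ω = false}]) := by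
      cases w
      · exact (hIV x (pos_iff_ne_zero.mpr hXGf)).symm.comp
          (measurable_snd.comp (measurable_snd.comp measurable_snd)) measurable_id
      · exact (hIV x (pos_iff_ne_zero.mpr hXGf)).symm.comp
          (measurable_fst.comp (measurable_snd.comp measurable_snd)) measurable_id
    -- positivity facts
    have hposGt : (P[|{ω | X ω = x}]) (G ⁻¹' {true}) ≠ 0 := by
      apply cond_pos_of_inter (mX x)
      rw [show (G ⁻¹' {true} : Set Ω) = {ω | G ω = true} from rfl]
      exact (hOvX1 x).ne'
    have hposGf : (P[|{ω | X ω = x}]) (G ⁻¹' {false}) ≠ 0 := by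
      apply cond_pos_of_inter (mX x)
      rw [show (G ⁻¹' {false} : Set Ω) = {ω | G ω = false} from rfl]
      exact hXGf
    have hposW : (P[|{ω | X ω = x} ∩ {ω | G ω = false}]) (W ⁻¹' {w}) ≠ 0 := by
      apply cond_pos_of_inter ((mX x).inter mGf)
      rw [show (W ⁻¹' {w} : Set Ω) = {ω | W ω = w} from rfl, hWsetEq]
      exact (hOv0 w x).ne'
    -- the probability chain
    have e1 : (P[|{ω | X ω = x} ∩ {ω | G ω = true}]) ((Y1 w) ⁻¹' {y})
        = (P[|{ω | X ω = x}]) ((Y1 w) ⁻¹' {y}) := by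
      have h := cond_of_indep (P[|{ω | X ω = x}]) hG hY1w_G (measurableSet_singleton y)
        (measurableSet_singleton true) hposGt
      rw [show (G ⁻¹' {true} : Set Ω) = {ω | G ω = true} from rfl,
        cond_cond_eq_cond_inter (mX x) mGt P] at h
      exact h
    have e2 : (P[|{ω | X ω = x}]) ((Y1 w) ⁻¹' {y})
        = (P[|{ω | X ω = x} ∩ {ω | G ω = false}]) ((Y1 w) ⁻¹' {y}) := by
      have h := cond_of_indep (P[|{ω | X ω = x}]) hG hY1w_G (measurableSet_singleton y)
        (measurableSet_singleton false) hposGf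
      rw [show (G ⁻¹' {false} : Set Ω) = {ω | G ω = false} from rfl,
        cond_cond_eq_cond_inter (mX x) mGf P] at h
      exact h.symm
    have e3 : (P[|{ω | X ω = x} ∩ {ω | G ω = false}]) ((Y1 w) ⁻¹' {y})
        = (P[|{ω | W ω = w} ∩ {ω | X ω = x} ∩ {ω | G ω = false}]) ((Y1 w) ⁻¹' {y}) := by
      have h := cond_of_indep (P[|{ω | X ω = x} ∩ {ω | G ω = false}]) hW hY1w_W
        (measurableSet_singleton y) (measurableSet_singleton w) hposW
      rw [show (W ⁻¹' {w} : Set Ω) = {ω | W ω = w} from rfl,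
        cond_cond_eq_cond_inter ((mX x).inter mGf) (mW w) P, hWsetEq] at h
      exact h.symm
    have e4 : (P[|{ω | W ω = w} ∩ {ω | X ω = x} ∩ {ω | G ω = false}]) ((Y1 w) ⁻¹' {y})
        = (P[|{ω | W ω = w} ∩ {ω | X ω = x} ∩ {ω | G ω = false}]) {ω | Y1 (W ω) ω = y} := by
      have mB : MeasurableSet ({ω | W ω = w} ∩ {ω | X ω = x} ∩ {ω | G ω = false}) :=
        ((mW w).inter (mX x)).inter mGf
      rw [cond_apply mB, cond_apply mB]
      congr 1
      congr 1
      ext ω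
      simp only [Set.mem_inter_iff, Set.mem_setOf_eq, Set.mem_preimage,
        Set.mem_singleton_iff]
      constructor
      · rintro ⟨⟨⟨h1, h2⟩, h3⟩, h4⟩
        exact ⟨⟨⟨h1, h2⟩, h3⟩, by rw [h1]; exact h4⟩
      · rintro ⟨⟨⟨h1, h2⟩, h3⟩, h4⟩
        exact ⟨⟨⟨h1, h2⟩, h3⟩, by rw [h1] at h4; exact h4⟩
    have probEq : cP P {ω | Y1 (W ω) ω = y}
        ({ω | W ω = w} ∩ {ω | X ω = x} ∩ {ω | G ω = false})
        = ((P[|{ω | X ω = x} ∩ {ω | G ω = true}]) ((Y1 w) ⁻¹' {y})).toReal :=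
      congrArg ENNReal.toReal (e1.trans (e2.trans (e3.trans e4))).symm
    -- the expectation chain
    haveI hPD : IsProbabilityMeasure
        (P[|{ω | Y1 w ω = y} ∩ {ω | X ω = x} ∩ {ω | G ω = true}]) :=
      cond_isProbabilityMeasure (hLUpos w y x).ne'
    have hindD : IndepFun (Y2 w) W
        (P[|{ω | Y1 w ω = y} ∩ {ω | X ω = x} ∩ {ω | G ω = true}]) :=
      (hLU w y x (hLUpos w y x)).symm
    have hintD : Integrable (Y2 w)
        (P[|{ω | Y1 w ω = y} ∩ {ω | X ω = x} ∩ {ω | G ω = true}]) :=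
      integrable_cond (hY2int w) (hLUpos w y x).ne'
    have hposWD : (P[|{ω | Y1 w ω = y} ∩ {ω | X ω = x} ∩ {ω | G ω = true}])
        (W ⁻¹' {w}) ≠ 0 := by
      apply cond_pos_of_inter (((mY1 w y).inter (mX x)).inter mGt)
      rw [show (W ⁻¹' {w} : Set Ω) = {ω | W ω = w} from rfl, hADeq]
      exact (hOv1 w y x).ne'
    have mA : MeasurableSet
        ({ω | Y1 (W ω) ω = y} ∩ {ω | W ω = w} ∩ {ω | X ω = x} ∩ {ω | G ω = true}) := by
      rw [← hADeq]
      exact (((mY1 w y).inter (mX x)).inter mGt).inter (mW w)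
    have expEq : cE P (fun ω => Y2 (W ω) ω)
        ({ω | Y1 (W ω) ω = y} ∩ {ω | W ω = w} ∩ {ω | X ω = x} ∩ {ω | G ω = true})
        = ∫ ω, Y2 w ω ∂((P[|{ω | X ω = x} ∩ {ω | G ω = true}])[|(Y1 w) ⁻¹' {y}]) := by
      have e5 := integral_cond_of_indep
        (P[|{ω | Y1 w ω = y} ∩ {ω | X ω = x} ∩ {ω | G ω = true}]) hW hintD hindD
        (measurableSet_singleton w) hposWD
      rw [show (W ⁻¹' {w} : Set Ω) = {ω | W ω = w} from rfl,
        cond_cond_eq_cond_inter (((mY1 w y).inter (mX x)).inter mGt) (mW w) P, hADeq] at e5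
      have e6 : cE P (fun ω => Y2 (W ω) ω)
          ({ω | Y1 (W ω) ω = y} ∩ {ω | W ω = w} ∩ {ω | X ω = x} ∩ {ω | G ω = true})
          = ∫ ω, Y2 w ω
            ∂(P[|{ω | Y1 (W ω) ω = y} ∩ {ω | W ω = w} ∩ {ω | X ω = x} ∩ {ω | G ω = true}]) :=
        integral_cond_congr_on mA (fun ω hω => by
          have h4 : W ω = w := hω.1.1.2
          rw [h4])
      rw [e6, e5, show ((Y1 w) ⁻¹' {y} : Set Ω) = {ω | Y1 w ω = y} from rfl,
        cond_cond_eq_cond_inter ((mX x).inter mGt) (mY1 w y) P, hCsetEq]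
    rw [probEq, expEq]
  rw [key true, key false, ← Finset.sum_sub_distrib]
  exact Finset.sum_congr rfl fun x _ => (mul_sub _ _ _).symm
end

section
/- (Symmetry identity for the Stein remainder of an exchangeable pair.) Let (X, X') be an exchangeable pair of random vectors in ℝ^p, let U be uniformly distributed on [0,1] and independent of (X, X'), set D := X' − X, and let g : ℝ^p → ℝ be a bounded measurable function. Then for all indices j, k, l ∈ {1, …, p} with E[|Dj Dk Dl|] < ∞: E[ Dj Dk Dl · U · g( X + (1−U) D ) ] = − E[ Dj Dk Dl · U · g( X + U D ) ]. -/
open MeasureTheory ProbabilityTheory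

/-- Symmetry identity for the Stein remainder of an exchangeable pair:
if `(X, X')` is an exchangeable pair in `ℝ^p`, `U` is uniform on `[0,1]` independent of
`(X, X')`, `D = X' − X`, and `g` is bounded measurable, then for all coordinates `j, k, l`
with `E[|Dⱼ Dₖ Dₗ|] < ∞`,
`E[Dⱼ Dₖ Dₗ · U · g(X + (1−U)D)] = −E[Dⱼ Dₖ Dₗ · U · g(X + U D)]`. -/
theorem stein_remainder_symmetry
    {Ω : Type*} [MeasurableSpace Ω] (P : Measure Ω) [IsProbabilityMeasure P]
    (p : ℕ) (X X' : Ω → Fin p → ℝ) (U : Ω → ℝ)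
    (hX : Measurable X) (hX' : Measurable X') (hU : Measurable U)
    -- exchangeability
    (hexch : P.map (fun ω => (X ω, X' ω)) = P.map (fun ω => (X' ω, X ω)))
    -- U is uniform on [0,1]
    (hunif : P.map U = MeasureTheory.volume.restrict (Set.Icc (0 : ℝ) 1))
    -- U independent of (X, X')
    (hUindep : IndepFun U (fun ω => (X ω, X' ω)) P)
    -- g bounded measurable
    (g : (Fin p → ℝ) → ℝ) (hg : Measurable g) (hgbdd : ∃ M : ℝ, ∀ v, |g v| ≤ M) :
    ∀ j k l : Fin p,
      Integrable (fun ω => |(X' ω j - X ω j) * (X' ω k - X ω k) * (X' ω l - X ω l)|) P →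
      ∫ ω, (X' ω j - X ω j) * (X' ω k - X ω k) * (X' ω l - X ω l) * U ω *
          g (fun m => X ω m + (1 - U ω) * (X' ω m - X ω m)) ∂P =
        -∫ ω, (X' ω j - X ω j) * (X' ω k - X ω k) * (X' ω l - X ω l) * U ω *
          g (fun m => X ω m + U ω * (X' ω m - X ω m)) ∂P := by
  intro j k l _hint
  have hpair : Measurable (fun ω => (X ω, X' ω)) := hX.prodMk hX'
  have hpair' : Measurable (fun ω => (X' ω, X ω)) := hX'.prodMk hX
  -- the joint law of (U, X, X') is symmetric under swapping X and X'
  have hUindep' : IndepFun U (fun ω => (X' ω, X ω)) P := by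
    have := hUindep.comp measurable_id measurable_swap
    exact this
  have hlaw : P.map (fun ω => (U ω, (X ω, X' ω))) = P.map (fun ω => (U ω, (X' ω, X ω))) := by
    rw [(indepFun_iff_map_prod_eq_prod_map_map hU.aemeasurable hpair.aemeasurable).mp hUindep,
      (indepFun_iff_map_prod_eq_prod_map_map hU.aemeasurable hpair'.aemeasurable).mp hUindep',
      hexch]
  set F : ℝ × ((Fin p → ℝ) × (Fin p → ℝ)) → ℝ := fun q =>
    (q.2.2 j - q.2.1 j) * (q.2.2 k - q.2.1 k) * (q.2.2 l - q.2.1 l) * q.1 *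
      g (fun m => q.2.1 m + (1 - q.1) * (q.2.2 m - q.2.1 m)) with hF
  have hFm : Measurable F := by
    apply Measurable.mul
    · fun_prop
    · exact hg.comp (by fun_prop)
  have h1 : ∫ ω, (X' ω j - X ω j) * (X' ω k - X ω k) * (X' ω l - X ω l) * U ω *
      g (fun m => X ω m + (1 - U ω) * (X' ω m - X ω m)) ∂P
      = ∫ q, F q ∂(P.map (fun ω => (U ω, (X ω, X' ω)))) := by
    rw [integral_map (hU.prodMk hpair).aemeasurable hFm.aestronglyMeasurable]
  have h2 : ∫ q, F q ∂(P.map (fun ω => (U ω, (X' ω, X ω))))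
      = ∫ ω, F (U ω, (X' ω, X ω)) ∂P := by
    rw [integral_map (hU.prodMk hpair').aemeasurable hFm.aestronglyMeasurable]
  rw [h1, hlaw, h2]
  have hpt : ∀ ω, F (U ω, (X' ω, X ω))
      = -((X' ω j - X ω j) * (X' ω k - X ω k) * (X' ω l - X ω l) * U ω *
        g (fun m => X ω m + U ω * (X' ω m - X ω m))) := by
    intro ω
    have harg : (fun m => X' ω m + (1 - U ω) * (X ω m - X' ω m))
        = (fun m => X ω m + U ω * (X' ω m - X ω m)) := by
      funext m; ring
    simp only [hF, harg]
    ring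
  simp only [hpt]
  rw [integral_neg]
end

section
/- (Maximal inequality for centered fourth-moment Gram fluctuations.) There exists a universal constant C > 0 such that for every M ≥ 2 and all independent random vectors ξ1, …, ξn in ℝ^M with E[ξij⁴] < ∞ for all i, j, the matrix V := Σ_{i=1}^n ( ξi ξiᵀ − E[ξi ξiᵀ] ) satisfies E[ max_{1 ≤ j,k ≤ M} | V_{jk} | ] ≤ C √(log M) · ( E[ max_{1 ≤ j ≤ M} Σ_{i=1}^n ξij⁴ ] )^{1/2}. -/
open MeasureTheory ProbabilityTheory Finset

namespace GramAux

/-! ### Elementary helpers -/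

/-- Rademacher sign associated to a boolean. -/
def rad (b : Bool) : ℝ := if b then 1 else -1

lemma le_sup'_univ {τ : Type*} {α : Type*} [Fintype τ] [Nonempty τ] [SemilatticeSup α]
    (f : τ → α) (t : τ) : f t ≤ univ.sup' univ_nonempty f :=
  Finset.le_sup' f (mem_univ t)

lemma sqrt_add_le' {a b : ℝ} (ha : 0 ≤ a) (hb : 0 ≤ b) :
    Real.sqrt (a + b) ≤ Real.sqrt a + Real.sqrt b := by
  have h1 := Real.sq_sqrt ha
  have h2 := Real.sq_sqrt hb
  have h3 := Real.sqrt_nonneg a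
  have h4 := Real.sqrt_nonneg b
  have : a + b ≤ (Real.sqrt a + Real.sqrt b) ^ 2 := by nlinarith [mul_nonneg h3 h4]
  calc Real.sqrt (a + b) ≤ Real.sqrt ((Real.sqrt a + Real.sqrt b) ^ 2) := Real.sqrt_le_sqrt this
    _ = Real.sqrt a + Real.sqrt b := Real.sqrt_sq (by positivity)

/-- finite Jensen for `exp` : `exp` of an average is at most the average of `exp`s. -/
lemma exp_avg_le {ι : Type*} [Fintype ι] [Nonempty ι] (f : ι → ℝ) :
    Real.exp ((∑ i, f i) / (Fintype.card ι : ℝ)) ≤ (∑ i, Real.exp (f i)) / Fintype.card ι := by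
  have hcard : (0:ℝ) < Fintype.card ι := by
    exact_mod_cast Fintype.card_pos
  have h := convexOn_exp.map_sum_le (t := (univ : Finset ι))
      (w := fun _ => (Fintype.card ι : ℝ)⁻¹) (p := f)
      (fun i _ => by positivity)
      (by
        simp only [Finset.sum_const, Finset.card_univ, nsmul_eq_mul]
        field_simp)
      (fun i _ => Set.mem_univ _)
  simpa [smul_eq_mul, div_eq_inv_mul, Finset.mul_sum] using h

/-- Average over sign vectors of `exp` of a signed sum is a product of `cosh`s. -/
lemma sum_exp_signed {n : ℕ} (c : Fin n → ℝ) :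
    ∑ ε : Fin n → Bool, Real.exp (∑ i, rad (ε i) * c i)
      = ∏ i, (Real.exp (c i) + Real.exp (-c i)) := by
  have : ∀ ε : Fin n → Bool, Real.exp (∑ i, rad (ε i) * c i)
      = ∏ i, Real.exp (rad (ε i) * c i) := fun ε => Real.exp_sum _ _
  simp_rw [this]
  have := (Finset.prod_univ_sum (fun _ : Fin n => (univ : Finset Bool))
      (fun i b => Real.exp (rad b * c i))).symm
  rw [Fintype.piFinset_univ] at this
  rw [this]
  apply Finset.prod_congr rfl
  intro i _
  simp [rad, Fintype.sum_bool, add_comm]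

/-- Maximal inequality for Rademacher averages over a finite index set. -/
lemma rademacher_max {n : ℕ} {τ : Type*} [Fintype τ] [Nonempty τ] (a : Fin n → τ → ℝ) :
    (∑ ε : Fin n → Bool, univ.sup' univ_nonempty (fun t => |∑ i, rad (ε i) * a i t|)) / 2 ^ n
      ≤ Real.sqrt (2 * Real.log (2 * Fintype.card τ)) *
        Real.sqrt (univ.sup' univ_nonempty (fun t => ∑ i, a i t ^ 2)) := by
  set S : ℝ := univ.sup' univ_nonempty (fun t : τ => ∑ i : Fin n, a i t ^ 2) with hSdef
  have hS0 : 0 ≤ S := by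
    obtain ⟨t⟩ := ‹Nonempty τ›
    have : ∑ i, a i t ^ 2 ≤ S := by
      rw [hSdef]; exact le_sup'_univ (fun t : τ => ∑ i : Fin n, a i t ^ 2) t
    exact le_trans (by positivity) this
  have hcard : (1:ℝ) ≤ (Fintype.card τ : ℝ) := by exact_mod_cast Fintype.card_pos
  have hL : 0 < Real.log (2 * Fintype.card τ) := Real.log_pos (by linarith)
  set L : ℝ := Real.log (2 * Fintype.card τ) with hLdef
  rcases eq_or_lt_of_le hS0 with hS | hS
  · -- degenerate case: all a i t = 0
    have hzero : ∀ i t, a i t = 0 := by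
      intro i t
      have h1 : ∑ i, a i t ^ 2 ≤ S := by
        rw [hSdef]; exact le_sup'_univ (fun t : τ => ∑ i : Fin n, a i t ^ 2) t
      have h2 : (0:ℝ) ≤ ∑ i, a i t ^ 2 := by positivity
      have h3 : ∑ i, a i t ^ 2 = 0 := le_antisymm (by rw [← hS] at h1; exact h1) h2
      have := (Finset.sum_eq_zero_iff_of_nonneg (fun i _ => sq_nonneg (a i t))).1 h3 i (mem_univ i)
      exact pow_eq_zero_iff (by norm_num) |>.1 this
    have : ∀ ε : Fin n → Bool,
        univ.sup' univ_nonempty (fun t => |∑ i, rad (ε i) * a i t|) = 0 := by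
      intro ε
      have : (fun t : τ => |∑ i, rad (ε i) * a i t|) = fun _ => 0 := by
        funext t; simp [hzero]
      rw [this, Finset.sup'_const]
    simp only [this, Finset.sum_const]
    have : Real.sqrt (2 * L) * Real.sqrt S ≥ 0 := by positivity
    simpa using this
  · -- main case
    set σ : ℝ := Real.sqrt S with hσdef
    have hσ : 0 < σ := Real.sqrt_pos.2 hS
    set lam : ℝ := Real.sqrt (2 * L) / σ with hlam
    have hlampos : 0 < lam := by
      apply div_pos _ hσ
      exact Real.sqrt_pos.2 (by linarith)
    set A : ℝ := (∑ ε : Fin n → Bool, univ.sup' univ_nonempty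
        (fun t => |∑ i, rad (ε i) * a i t|)) / 2 ^ n with hA
    -- Step 1: Jensen
    have hcard2 : (Fintype.card (Fin n → Bool) : ℝ) = 2 ^ n := by
      simp [Fintype.card_fun]
    have jensen : Real.exp (lam * A) ≤
        (∑ ε : Fin n → Bool, Real.exp (lam * univ.sup' univ_nonempty
          (fun t => |∑ i, rad (ε i) * a i t|))) / 2 ^ n := by
      have h := exp_avg_le (fun ε : Fin n → Bool =>
        lam * univ.sup' univ_nonempty (fun t => |∑ i, rad (ε i) * a i t|))
      rw [hcard2] at h
      rw [← Finset.mul_sum] at h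
      have harg : lam * A = lam * (∑ ε : Fin n → Bool, univ.sup' univ_nonempty
          (fun t => |∑ i, rad (ε i) * a i t|)) / 2 ^ n := by
        rw [hA]; ring
      rw [harg]
      exact h
    -- Step 2: bound each exp of max by sum of exps
    have step2 : ∀ ε : Fin n → Bool,
        Real.exp (lam * univ.sup' univ_nonempty (fun t => |∑ i, rad (ε i) * a i t|))
          ≤ ∑ t : τ, (Real.exp (∑ i, rad (ε i) * (lam * a i t))
              + Real.exp (∑ i, rad (ε i) * (-(lam * a i t)))) := by
      intro ε
      obtain ⟨t₀, -, ht₀⟩ := Finset.exists_mem_eq_sup' (univ_nonempty)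
        (fun t : τ => |∑ i, rad (ε i) * a i t|)
      rw [ht₀]
      have key : Real.exp (lam * |∑ i, rad (ε i) * a i t₀|)
          ≤ Real.exp (∑ i, rad (ε i) * (lam * a i t₀))
            + Real.exp (∑ i, rad (ε i) * (-(lam * a i t₀))) := by
        have e1 : ∑ i, rad (ε i) * (lam * a i t₀) = lam * ∑ i, rad (ε i) * a i t₀ := by
          rw [Finset.mul_sum]; apply Finset.sum_congr rfl; intro i _; ring
        have e2 : ∑ i, rad (ε i) * (-(lam * a i t₀)) = -(lam * ∑ i, rad (ε i) * a i t₀) := by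
          rw [← neg_eq_iff_eq_neg, ← Finset.sum_neg_distrib, Finset.mul_sum]
          apply Finset.sum_congr rfl; intro i _; ring
        rw [e1, e2]
        rcases abs_cases (∑ i, rad (ε i) * a i t₀) with ⟨h, -⟩ | ⟨h, -⟩
        · rw [h]; exact le_add_of_nonneg_right (Real.exp_pos _).le
        · rw [h, mul_neg]; exact le_add_of_nonneg_left (Real.exp_pos _).le
      refine le_trans key ?_
      exact Finset.single_le_sum (f := fun t => Real.exp (∑ i, rad (ε i) * (lam * a i t))
        + Real.exp (∑ i, rad (ε i) * (-(lam * a i t))))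
        (fun t _ => by positivity) (mem_univ t₀)
    -- Step 3: Each Rademacher-averaged exponential sum is bounded using cosh ≤ exp sq half
    have prodbound : ∀ c : Fin n → ℝ, (∑ ε : Fin n → Bool, Real.exp (∑ i, rad (ε i) * c i))
        ≤ 2 ^ n * Real.exp (∑ i, c i ^ 2 / 2) := by
      intro c
      rw [sum_exp_signed]
      have : ∀ i : Fin n, Real.exp (c i) + Real.exp (-c i)
          ≤ 2 * Real.exp (c i ^ 2 / 2) := by
        intro i
        have := Real.cosh_le_exp_half_sq (c i)
        rw [Real.cosh_eq] at this
        linarith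
      calc ∏ i, (Real.exp (c i) + Real.exp (-c i)) ≤ ∏ i, 2 * Real.exp (c i ^ 2 / 2) :=
            Finset.prod_le_prod (fun i _ => by positivity) (fun i _ => this i)
        _ = 2 ^ n * Real.exp (∑ i, c i ^ 2 / 2) := by
            rw [Finset.prod_mul_distrib, ← Real.exp_sum]
            simp [Finset.prod_const]
    -- combine
    have main : Real.exp (lam * A) ≤ 2 * Fintype.card τ * Real.exp (lam ^ 2 * S / 2) := by
      have hsum : ∑ ε : Fin n → Bool, Real.exp (lam * univ.sup' univ_nonempty
            (fun t => |∑ i, rad (ε i) * a i t|))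
          ≤ ∑ t : τ, ((2:ℝ) ^ n * Real.exp (∑ i, (lam * a i t) ^ 2 / 2)
              + 2 ^ n * Real.exp (∑ i, (-(lam * a i t)) ^ 2 / 2)) := by
        calc ∑ ε : Fin n → Bool, Real.exp (lam * univ.sup' univ_nonempty
              (fun t => |∑ i, rad (ε i) * a i t|))
            ≤ ∑ ε : Fin n → Bool, ∑ t : τ, (Real.exp (∑ i, rad (ε i) * (lam * a i t))
                + Real.exp (∑ i, rad (ε i) * (-(lam * a i t)))) :=
              Finset.sum_le_sum fun ε _ => step2 ε
          _ = ∑ t : τ, ((∑ ε : Fin n → Bool, Real.exp (∑ i, rad (ε i) * (lam * a i t)))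
                + ∑ ε : Fin n → Bool, Real.exp (∑ i, rad (ε i) * (-(lam * a i t)))) := by
              rw [Finset.sum_comm]
              apply Finset.sum_congr rfl; intro t _; rw [Finset.sum_add_distrib]
          _ ≤ _ := by
              apply Finset.sum_le_sum; intro t _
              exact add_le_add (prodbound _) (prodbound _)
      have hexp : ∀ t : τ, Real.exp (∑ i, (lam * a i t) ^ 2 / 2)
          ≤ Real.exp (lam ^ 2 * S / 2) := by
        intro t
        apply Real.exp_le_exp.2
        have : ∑ i, (lam * a i t) ^ 2 / 2 = lam ^ 2 * (∑ i, a i t ^ 2) / 2 := by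
          rw [Finset.mul_sum, Finset.sum_div]
          apply Finset.sum_congr rfl; intro i _; ring
        rw [this]
        have hle : ∑ i, a i t ^ 2 ≤ S := by
          rw [hSdef]; exact le_sup'_univ (fun t : τ => ∑ i : Fin n, a i t ^ 2) t
        have : (0:ℝ) ≤ lam ^ 2 := sq_nonneg _
        nlinarith
      calc Real.exp (lam * A)
          ≤ (∑ ε : Fin n → Bool, Real.exp (lam * univ.sup' univ_nonempty
              (fun t => |∑ i, rad (ε i) * a i t|))) / 2 ^ n := jensen
        _ ≤ (∑ t : τ, ((2:ℝ) ^ n * Real.exp (∑ i, (lam * a i t) ^ 2 / 2)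
              + 2 ^ n * Real.exp (∑ i, (-(lam * a i t)) ^ 2 / 2))) / 2 ^ n := by
            apply div_le_div_of_nonneg_right hsum ?_ |>.trans_eq rfl
            · positivity
        _ = ∑ t : τ, (Real.exp (∑ i, (lam * a i t) ^ 2 / 2)
              + Real.exp (∑ i, (-(lam * a i t)) ^ 2 / 2)) := by
            rw [Finset.sum_div]
            apply Finset.sum_congr rfl; intro t _
            field_simp
        _ ≤ ∑ t : τ, (Real.exp (lam ^ 2 * S / 2) + Real.exp (lam ^ 2 * S / 2)) := by
            apply Finset.sum_le_sum; intro t _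
            have h2 : Real.exp (∑ i, (-(lam * a i t)) ^ 2 / 2) ≤ Real.exp (lam ^2 * S / 2) := by
              have : ∀ i : Fin n, (-(lam * a i t)) ^ 2 / 2 = (lam * a i t) ^ 2/2 := fun i => by ring
              simp_rw [this]; exact hexp t
            exact add_le_add (hexp t) h2
        _ = 2 * Fintype.card τ * Real.exp (lam ^ 2 * S / 2) := by
            rw [Finset.sum_const]
            simp [Finset.card_univ]; ring
    -- take logs
    have hrhspos : (0:ℝ) < 2 * Fintype.card τ * Real.exp (lam ^ 2 * S / 2) := by positivity
    have hlog : lam * A ≤ L + lam ^ 2 * S / 2 := by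
      have := Real.log_le_log (Real.exp_pos _) main
      rw [Real.log_exp, Real.log_mul (by linarith) (Real.exp_pos _).ne',
        Real.log_exp] at this
      exact this.trans_eq (by rw [hLdef])
    have hA_le : A ≤ L / lam + lam * S / 2 := by
      rw [← mul_le_mul_iff_right₀ hlampos]
      calc lam * A ≤ L + lam ^ 2 * S / 2 := hlog
        _ = lam * (L / lam + lam * S / 2) := by field_simp
    have h2L : Real.sqrt (2 * L) ^ 2 = 2 * L := Real.sq_sqrt (by linarith)
    have hSsq : σ ^ 2 = S := Real.sq_sqrt hS0
    have hsq2L : 0 < Real.sqrt (2 * L) := Real.sqrt_pos.2 (by linarith)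
    have h1 : L / lam = σ * Real.sqrt (2 * L) / 2 := by
      rw [hlam, div_div_eq_mul_div, div_eq_div_iff hsq2L.ne' (by norm_num : (2:ℝ) ≠ 0)]
      linear_combination (-σ) * h2L
    have h2 : lam * S / 2 = σ * Real.sqrt (2 * L) / 2 := by
      rw [hlam, ← hSsq]
      field_simp
    have hfinal : L / lam + lam * S / 2 = Real.sqrt (2 * L) * Real.sqrt S := by
      rw [h1, h2, hσdef]; ring
    exact hA_le.trans_eq hfinal

/-! ### Measure-theoretic helpers -/

lemma abs_sup'_le_sum {τ : Type*} [Fintype τ] [Nonempty τ] (g : τ → ℝ) :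
    |univ.sup' univ_nonempty g| ≤ ∑ t, |g t| := by
  rw [abs_le]
  constructor
  · obtain ⟨t₀⟩ := ‹Nonempty τ›
    have h1 : -(∑ t, |g t|) ≤ g t₀ := by
      have : |g t₀| ≤ ∑ t, |g t| := Finset.single_le_sum (fun t _ => abs_nonneg (g t)) (mem_univ t₀)
      have h2 := neg_abs_le (g t₀)
      linarith
    exact h1.trans (Finset.le_sup' g (mem_univ t₀))
  · apply Finset.sup'_le
    intro t _
    exact (le_abs_self _).trans (Finset.single_le_sum (fun t _ => abs_nonneg (g t)) (mem_univ t))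

lemma sup'_nonneg' {τ : Type*} [Fintype τ] [Nonempty τ] {g : τ → ℝ} (hg : ∀ t, 0 ≤ g t) :
    0 ≤ univ.sup' univ_nonempty g := by
  obtain ⟨t₀⟩ := ‹Nonempty τ›
  exact (hg t₀).trans (Finset.le_sup' g (mem_univ t₀))

lemma measurable_sup'_fun {α : Type*} [MeasurableSpace α] {τ : Type*} [Fintype τ] [Nonempty τ]
    (F : τ → α → ℝ) (hm : ∀ t, Measurable (F t)) :
    Measurable (fun ω => univ.sup' univ_nonempty (fun t => F t ω)) := by
  have : (fun ω => univ.sup' univ_nonempty (fun t => F t ω))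
      = univ.sup' univ_nonempty F := by
    funext ω
    rw [Finset.sup'_apply]
  rw [this]
  exact Finset.measurable_sup' univ_nonempty (fun t _ => hm t)

lemma integrable_sup'_fun {α : Type*} [MeasurableSpace α] {P : Measure α}
    {τ : Type*} [Fintype τ] [Nonempty τ] (F : τ → α → ℝ)
    (hm : ∀ t, Measurable (F t)) (hi : ∀ t, Integrable (F t) P) :
    Integrable (fun ω => univ.sup' univ_nonempty (fun t => F t ω)) P := by
  refine Integrable.mono' (integrable_finset_sum univ (fun t _ => (hi t).abs))
    (measurable_sup'_fun F hm).aestronglyMeasurable ?_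
  filter_upwards with ω
  rw [Real.norm_eq_abs]
  exact abs_sup'_le_sum (fun t => F t ω)

lemma iSup_pair {τ₁ τ₂ : Type*} [Fintype τ₁] [Fintype τ₂] [Nonempty τ₁] [Nonempty τ₂]
    (F : τ₁ → τ₂ → ℝ) :
    (⨆ a, ⨆ b, F a b) = univ.sup' univ_nonempty (fun t : τ₁ × τ₂ => F t.1 t.2) := by
  apply le_antisymm
  · apply ciSup_le; intro a; apply ciSup_le; intro b
    exact le_sup'_univ (fun t : τ₁ × τ₂ => F t.1 t.2) (a, b)
  · apply Finset.sup'_le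
    rintro ⟨a, b⟩ -
    calc F a b ≤ ⨆ b, F a b := le_ciSup (Set.Finite.bddAbove (Set.finite_range _)) b
      _ ≤ ⨆ a, ⨆ b, F a b :=
        le_ciSup (f := fun a => ⨆ b, F a b) (Set.Finite.bddAbove (Set.finite_range _)) a

/-- the joint law of an independent family is the product of the laws. -/
lemma law_eq_pi {Ω : Type*} [MeasurableSpace Ω] (P : Measure Ω) [IsProbabilityMeasure P]
    {n : ℕ} {E : Type*} [MeasurableSpace E] (ξ : Fin n → Ω → E)
    (hm : ∀ i, Measurable (ξ i))
    (hind : iIndepFun ξ P) :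
    P.map (fun ω i => ξ i ω) = Measure.pi (fun i => P.map (ξ i)) := by
  haveI : ∀ i, IsProbabilityMeasure (P.map (ξ i)) :=
    fun i => Measure.isProbabilityMeasure_map (hm i).aemeasurable
  refine (Measure.pi_eq fun s hs => ?_).symm
  rw [Measure.map_apply (measurable_pi_lambda _ fun i => hm i) (MeasurableSet.univ_pi hs)]
  have hpre : (fun ω i => ξ i ω) ⁻¹' (Set.pi Set.univ s) = ⋂ i, ξ i ⁻¹' s i := by
    ext ω; simp [Set.mem_pi]
  rw [hpre, hind.meas_iInter (fun i => ⟨s i, hs i, rfl⟩)]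
  exact Finset.prod_congr rfl fun i _ => (Measure.map_apply (hm i) (hs i)).symm

/-- the paired law of two independent copies. -/
lemma paired_law {Ω : Type*} [MeasurableSpace Ω] (P : Measure Ω) [IsProbabilityMeasure P]
    {n : ℕ} {E : Type*} [MeasurableSpace E] (ξ : Fin n → Ω → E)
    (hm : ∀ i, Measurable (ξ i))
    (hind : iIndepFun ξ P) :
    (P.prod P).map (fun p (i : Fin n) => (ξ i p.1, ξ i p.2))
      = Measure.pi (fun i => (P.map (ξ i)).prod (P.map (ξ i))) := by
  haveI : ∀ i, IsProbabilityMeasure (P.map (ξ i)) :=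
    fun i => Measure.isProbabilityMeasure_map (hm i).aemeasurable
  set J : Ω → Fin n → E := fun ω i => ξ i ω with hJ
  have hJm : Measurable J := measurable_pi_lambda _ fun i => hm i
  have h1 : (P.prod P).map (Prod.map J J) = (Measure.pi fun i => P.map (ξ i)).prod
      (Measure.pi fun i => P.map (ξ i)) := by
    rw [← law_eq_pi P ξ hm hind, Measure.map_prod_map _ _ hJm hJm]
  have he : MeasurePreserving (MeasurableEquiv.arrowProdEquivProdArrow E E (Fin n))
      (Measure.pi fun i => (P.map (ξ i)).prod (P.map (ξ i)))
      ((Measure.pi fun i => P.map (ξ i)).prod (Measure.pi fun i => P.map (ξ i))) :=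
    measurePreserving_arrowProdEquivProdArrow E E (Fin n) _ _
  have hsymm := he.symm (MeasurableEquiv.arrowProdEquivProdArrow E E (Fin n))
  have hcomp : (fun p (i : Fin n) => (ξ i p.1, ξ i p.2))
      = (MeasurableEquiv.arrowProdEquivProdArrow E E (Fin n)).symm ∘ (Prod.map J J) := by
    funext p
    simp [MeasurableEquiv.arrowProdEquivProdArrow, Equiv.arrowProdEquivProdArrow, hJ]
  rw [hcomp, ← Measure.map_map (MeasurableEquiv.measurable _) (hJm.prodMap hJm), h1,
    hsymm.map_eq]

lemma integrable_comp_fst {α β : Type*} [MeasurableSpace α] [MeasurableSpace β]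
    {P : Measure α} {Q : Measure β} [IsProbabilityMeasure P] [IsProbabilityMeasure Q]
    {f : α → ℝ} (hf : Integrable f P) :
    Integrable (fun p : α × β => f p.1) (P.prod Q) := by
  have hmap : (P.prod Q).map Prod.fst = P := by
    rw [Measure.map_fst_prod]; simp
  have h1 : AEStronglyMeasurable f ((P.prod Q).map Prod.fst) := by
    rw [hmap]; exact hf.aestronglyMeasurable
  have h2 : Integrable f ((P.prod Q).map Prod.fst) := by
    rw [hmap]; exact hf
  exact (integrable_map_measure h1 measurable_fst.aemeasurable).mp h2

lemma integrable_comp_snd {α β : Type*} [MeasurableSpace α] [MeasurableSpace β]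
    {P : Measure α} {Q : Measure β} [IsProbabilityMeasure P] [IsProbabilityMeasure Q]
    {f : β → ℝ} (hf : Integrable f Q) :
    Integrable (fun p : α × β => f p.2) (P.prod Q) := by
  have hmap : (P.prod Q).map Prod.snd = Q := by
    rw [Measure.map_snd_prod]; simp
  have h1 : AEStronglyMeasurable f ((P.prod Q).map Prod.snd) := by
    rw [hmap]; exact hf.aestronglyMeasurable
  have h2 : Integrable f ((P.prod Q).map Prod.snd) := by
    rw [hmap]; exact hf
  exact (integrable_map_measure h1 measurable_snd.aemeasurable).mp h2

lemma sqrt_le_one_add {x : ℝ} (hx : 0 ≤ x) : Real.sqrt x ≤ 1 + x := by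
  nlinarith [Real.sq_sqrt hx, Real.sqrt_nonneg x, sq_nonneg (Real.sqrt x - 1)]

end GramAux

open GramAux

/-- Maximal inequality for centered fourth-moment Gram fluctuations: there
is a universal constant `C > 0` such that for every `M ≥ 2` and independent random vectors
`ξ₁, …, ξₙ` in `ℝ^M` with finite fourth moments, the centered Gram matrix
`V = Σᵢ (ξᵢξᵢᵀ − E[ξᵢξᵢᵀ])` satisfies
`E[max_{j,k} |V_{jk}|] ≤ C √(log M) (E[max_j Σᵢ ξᵢⱼ⁴])^{1/2}`. -/
theorem gram_fluctuation_maximal_inequality :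
    ∃ C : ℝ, 0 < C ∧
      ∀ (Ω : Type) (_ : MeasurableSpace Ω) (P : Measure Ω), IsProbabilityMeasure P →
      ∀ (M n : ℕ), 2 ≤ M →
      ∀ ξ : Fin n → Ω → Fin M → ℝ,
        (∀ i, Measurable (ξ i)) →
        (∀ (i : Fin n) (j : Fin M), Integrable (fun ω => (ξ i ω j) ^ 4) P) →
        iIndepFun ξ P →
        ∫ ω, ⨆ j : Fin M, ⨆ k : Fin M,
            |∑ i : Fin n, (ξ i ω j * ξ i ω k - ∫ ω', ξ i ω' j * ξ i ω' k ∂P)| ∂P ≤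
          C * Real.sqrt (Real.log M) *
            Real.sqrt (∫ ω, ⨆ j : Fin M, ∑ i : Fin n, (ξ i ω j) ^ 4 ∂P) := by
  refine ⟨8, by norm_num, ?_⟩
  intro Ω mΩ P hP M n hM ξ hmeas hint4 hind
  haveI := hP
  have hM0 : 0 < M := by omega
  haveI : Nonempty (Fin M) := ⟨⟨0, hM0⟩⟩
  -- basic measurability and integrability
  have hcm : ∀ i (j : Fin M), Measurable (fun ω => ξ i ω j) :=
    fun i j => (measurable_pi_apply j).comp (hmeas i)
  have hYm : ∀ i (t : Fin M × Fin M), Measurable (fun ω => ξ i ω t.1 * ξ i ω t.2) :=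
    fun i t => (hcm i t.1).mul (hcm i t.2)
  have hint2 : ∀ i (j : Fin M), Integrable (fun ω => ξ i ω j ^ 2) P := by
    intro i j
    refine Integrable.mono' ((integrable_const 1).add (hint4 i j))
      ((hcm i j).pow_const 2).aestronglyMeasurable ?_
    filter_upwards with ω
    rw [Real.norm_eq_abs, abs_of_nonneg (sq_nonneg _)]
    simp only [Pi.add_apply]
    nlinarith [sq_nonneg (ξ i ω j ^ 2 - 1), sq_nonneg (ξ i ω j ^ 2)]
  have hYint : ∀ i (t : Fin M × Fin M), Integrable (fun ω => ξ i ω t.1 * ξ i ω t.2) P := by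
    intro i t
    refine Integrable.mono' ((hint2 i t.1).add (hint2 i t.2)) (hYm i t).aestronglyMeasurable ?_
    filter_upwards with ω
    rw [Real.norm_eq_abs, abs_mul]
    simp only [Pi.add_apply]
    nlinarith [sq_nonneg (|ξ i ω t.1| - |ξ i ω t.2|), sq_abs (ξ i ω t.1), sq_abs (ξ i ω t.2),
      abs_nonneg (ξ i ω t.1), abs_nonneg (ξ i ω t.2)]
  -- the centered sums and the symmetrized difference function
  set m : Fin n → Fin M × Fin M → ℝ := fun i t => ∫ ω', ξ i ω' t.1 * ξ i ω' t.2 ∂P with hm_def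
  set D : Ω → Ω → ℝ := fun ω ω' => univ.sup' univ_nonempty
      (fun t : Fin M × Fin M => |∑ i, (ξ i ω t.1 * ξ i ω t.2 - ξ i ω' t.1 * ξ i ω' t.2)|)
    with hD_def
  -- the law space
  set ν : Measure (Fin n → (Fin M → ℝ) × (Fin M → ℝ)) :=
    Measure.pi (fun i => (P.map (ξ i)).prod (P.map (ξ i))) with hν_def
  haveI : ∀ i : Fin n, IsProbabilityMeasure (P.map (ξ i)) :=
    fun i => Measure.isProbabilityMeasure_map (hmeas i).aemeasurable
  haveI : IsProbabilityMeasure ν := by rw [hν_def]; infer_instance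
  set Φ : Ω × Ω → Fin n → (Fin M → ℝ) × (Fin M → ℝ) :=
    fun p i => (ξ i p.1, ξ i p.2) with hΦ_def
  have hΦm : Measurable Φ := measurable_pi_lambda _ fun i =>
    (((hmeas i).comp measurable_fst).prodMk ((hmeas i).comp measurable_snd))
  set g : (Fin n → (Fin M → ℝ) × (Fin M → ℝ)) → ℝ := fun x => univ.sup' univ_nonempty
      (fun t : Fin M × Fin M =>
        |∑ i, ((x i).1 t.1 * (x i).1 t.2 - (x i).2 t.1 * (x i).2 t.2)|) with hg_def
  have hco1 : ∀ (i : Fin n) (j : Fin M),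
      Measurable (fun x : Fin n → (Fin M → ℝ) × (Fin M → ℝ) => (x i).1 j) :=
    fun i j => (measurable_pi_apply j).comp (Measurable.fst (measurable_pi_apply i))
  have hco2 : ∀ (i : Fin n) (j : Fin M),
      Measurable (fun x : Fin n → (Fin M → ℝ) × (Fin M → ℝ) => (x i).2 j) :=
    fun i j => (measurable_pi_apply j).comp (Measurable.snd (measurable_pi_apply i))
  have hgm : Measurable g := by
    rw [hg_def]
    apply measurable_sup'_fun
    intro t
    apply Measurable.abs
    apply Finset.measurable_sum
    intro i _
    exact ((hco1 i t.1).mul (hco1 i t.2)).sub ((hco2 i t.1).mul (hco2 i t.2))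

  -- G : the sign-flipped versions of g
  set G : (Fin n → Bool) → (Fin n → (Fin M → ℝ) × (Fin M → ℝ)) → ℝ := fun ε x =>
    univ.sup' univ_nonempty (fun t : Fin M × Fin M =>
      |∑ i, rad (ε i) * ((x i).1 t.1 * (x i).1 t.2 - (x i).2 t.1 * (x i).2 t.2)|) with hG_def
  -- the max of the fourth-moment sums, on Ω and on the path spaces
  set WΩ : Ω → ℝ := fun ω => univ.sup' univ_nonempty
    (fun j : Fin M => ∑ i, ξ i ω j ^ 4) with hWΩ_def
  set WE : (Fin n → Fin M → ℝ) → ℝ := fun y => univ.sup' univ_nonempty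
    (fun j : Fin M => ∑ i, y i j ^ 4) with hWE_def
  set W1 : (Fin n → (Fin M → ℝ) × (Fin M → ℝ)) → ℝ := fun x => univ.sup' univ_nonempty
    (fun j : Fin M => ∑ i, ((x i).1 j) ^ 4) with hW1_def
  set W2 : (Fin n → (Fin M → ℝ) × (Fin M → ℝ)) → ℝ := fun x => univ.sup' univ_nonempty
    (fun j : Fin M => ∑ i, ((x i).2 j) ^ 4) with hW2_def
  have hWEm : Measurable WE := by
    rw [hWE_def]
    exact measurable_sup'_fun _ (fun j => Finset.measurable_sum _
      (fun i _ => ((measurable_pi_apply j).comp (measurable_pi_apply i)).pow_const 4))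
  have hWΩm : Measurable WΩ := by
    rw [hWΩ_def]
    exact measurable_sup'_fun _ (fun j => Finset.measurable_sum _
      (fun i _ => (hcm i j).pow_const 4))
  have hWΩ0 : ∀ ω, 0 ≤ WΩ ω := fun ω => sup'_nonneg' (fun j => by positivity)
  have hWΩint : Integrable WΩ P := by
    rw [hWΩ_def]
    exact integrable_sup'_fun _ (fun j => Finset.measurable_sum _ (fun i _ => (hcm i j).pow_const 4))
      (fun j => integrable_finset_sum _ (fun i _ => hint4 i j))
  have hsqWm : Measurable (fun ω => Real.sqrt (WΩ ω)) :=
    Real.continuous_sqrt.measurable.comp hWΩm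
  have hsqWint : Integrable (fun ω => Real.sqrt (WΩ ω)) P := by
    refine Integrable.mono' ((integrable_const 1).add hWΩint) hsqWm.aestronglyMeasurable ?_
    filter_upwards with ω
    rw [Real.norm_eq_abs, abs_of_nonneg (Real.sqrt_nonneg _)]
    simp only [Pi.add_apply]
    exact sqrt_le_one_add (hWΩ0 ω)
  -- the joint law
  set J : Ω → (Fin n → Fin M → ℝ) := fun ω i => ξ i ω with hJ_def
  have hJm : Measurable J := measurable_pi_lambda _ fun i => hmeas i
  have hlaw : P.map J = Measure.pi (fun i => P.map (ξ i)) := law_eq_pi P ξ hmeas hind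
  have hpl : (P.prod P).map Φ = ν := by
    rw [hν_def, hΦ_def]; exact paired_law P ξ hmeas hind
  -- Step A : pointwise symmetrization
  have hDmeas : ∀ ω, ∀ t : Fin M × Fin M, Measurable (fun ω' =>
      |∑ i, (ξ i ω t.1 * ξ i ω t.2 - ξ i ω' t.1 * ξ i ω' t.2)|) := fun ω t =>
    (Finset.measurable_sum _ (fun i _ => measurable_const.sub (hYm i t))).abs
  have hDint1 : ∀ ω, ∀ t : Fin M × Fin M, Integrable (fun ω' =>
      |∑ i, (ξ i ω t.1 * ξ i ω t.2 - ξ i ω' t.1 * ξ i ω' t.2)|) P := fun ω t =>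
    (integrable_finset_sum _ (fun i _ => (integrable_const _).sub (hYint i t))).abs
  have hDint : ∀ ω, Integrable (D ω) P := by
    intro ω
    rw [hD_def]
    exact integrable_sup'_fun _ (hDmeas ω) (hDint1 ω)
  have stepA : ∀ ω, univ.sup' univ_nonempty
      (fun t : Fin M × Fin M => |∑ i, (ξ i ω t.1 * ξ i ω t.2 - m i t)|)
        ≤ ∫ ω', D ω ω' ∂P := by
    intro ω
    apply Finset.sup'_le
    intro t _
    have hintsub : ∀ i : Fin n, Integrable
        (fun ω' => ξ i ω t.1 * ξ i ω t.2 - ξ i ω' t.1 * ξ i ω' t.2) P :=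
      fun i => (integrable_const _).sub (hYint i t)
    have hrepr : ∑ i, (ξ i ω t.1 * ξ i ω t.2 - m i t)
        = ∫ ω', ∑ i, (ξ i ω t.1 * ξ i ω t.2 - ξ i ω' t.1 * ξ i ω' t.2) ∂P := by
      rw [integral_finset_sum _ (fun i _ => hintsub i)]
      refine Finset.sum_congr rfl fun i _ => ?_
      rw [integral_sub (integrable_const _) (hYint i t), integral_const, probReal_univ,
        one_smul, hm_def]
    rw [hrepr]
    have h1 : |∫ ω', ∑ i, (ξ i ω t.1 * ξ i ω t.2 - ξ i ω' t.1 * ξ i ω' t.2) ∂P|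
        ≤ ∫ ω', |∑ i, (ξ i ω t.1 * ξ i ω t.2 - ξ i ω' t.1 * ξ i ω' t.2)| ∂P := by
      have := norm_integral_le_integral_norm
        (f := fun ω' => ∑ i, (ξ i ω t.1 * ξ i ω t.2 - ξ i ω' t.1 * ξ i ω' t.2)) (μ := P)
      simpa [Real.norm_eq_abs] using this
    refine h1.trans (integral_mono (hDint1 ω t) (hDint ω) ?_)
    intro ω'
    rw [hD_def]
    exact le_sup'_univ (fun t : Fin M × Fin M =>
      |∑ i, (ξ i ω t.1 * ξ i ω t.2 - ξ i ω' t.1 * ξ i ω' t.2)|) t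
  -- Step B : integrability on the product space
  have hDDm : Measurable (fun p : Ω × Ω => D p.1 p.2) := by
    rw [hD_def]
    exact measurable_sup'_fun (fun t : Fin M × Fin M => fun p : Ω × Ω =>
        |∑ i, (ξ i p.1 t.1 * ξ i p.1 t.2 - ξ i p.2 t.1 * ξ i p.2 t.2)|)
      (fun t => (Finset.measurable_sum _ (fun i _ =>
        ((hYm i t).comp measurable_fst).sub ((hYm i t).comp measurable_snd))).abs)
  have hDDint : Integrable (fun p : Ω × Ω => D p.1 p.2) (P.prod P) := by
    refine Integrable.mono' (g := fun p : Ω × Ω => ∑ t : Fin M × Fin M, ∑ i,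
        (|ξ i p.1 t.1 * ξ i p.1 t.2| + |ξ i p.2 t.1 * ξ i p.2 t.2|))
      ?_ hDDm.aestronglyMeasurable ?_
    · exact integrable_finset_sum _ (fun t _ => integrable_finset_sum _ (fun i _ =>
        (integrable_comp_fst (hYint i t).abs).add (integrable_comp_snd (hYint i t).abs)))
    · filter_upwards with p
      rw [Real.norm_eq_abs, hD_def]
      refine (abs_sup'_le_sum _).trans (Finset.sum_le_sum fun t _ => ?_)
      rw [abs_abs]
      refine (Finset.abs_sum_le_sum_abs _ _).trans (Finset.sum_le_sum fun i _ => ?_)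
      exact abs_sub _ _
  have int_outer : Integrable (fun ω => ∫ ω', D ω ω' ∂P) P := hDDint.integral_prod_left
  -- Step C : move to the canonical space
  have eq_prod : ∫ ω, (∫ ω', D ω ω' ∂P) ∂P = ∫ p, D p.1 p.2 ∂(P.prod P) :=
    integral_integral hDDint
  have hgΦ : ∀ p : Ω × Ω, g (Φ p) = D p.1 p.2 := fun p => rfl
  have eq_map : ∫ p, D p.1 p.2 ∂(P.prod P) = ∫ x, g x ∂ν := by
    rw [← hpl, integral_map hΦm.aemeasurable (by rw [hpl]; exact hgm.aestronglyMeasurable)]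
  have hgint : Integrable g ν := by
    rw [← hpl]
    refine (integrable_map_measure ?_ hΦm.aemeasurable).mpr ?_
    · rw [hpl]; exact hgm.aestronglyMeasurable
    · exact hDDint.congr (Filter.Eventually.of_forall fun p => (hgΦ p).symm)
  -- Step D : sign flips
  have hkey : ∀ ε : Fin n → Bool, Integrable (G ε) ν ∧ ∫ x, g x ∂ν = ∫ x, G ε x ∂ν := by
    intro ε
    set T : (Fin n → (Fin M → ℝ) × (Fin M → ℝ)) → (Fin n → (Fin M → ℝ) × (Fin M → ℝ)) :=
      fun x i => if ε i then x i else Prod.swap (x i) with hT_def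
    have hfac : ∀ i : Fin n, MeasurePreserving
        (fun q : (Fin M → ℝ) × (Fin M → ℝ) => if ε i then q else Prod.swap q)
        ((P.map (ξ i)).prod (P.map (ξ i))) ((P.map (ξ i)).prod (P.map (ξ i))) := by
      intro i
      cases hb : ε i
      · simp only [hb, Bool.false_eq_true, if_false]
        exact Measure.measurePreserving_swap
      · simp only [hb, if_true]
        exact MeasurePreserving.id _
    have hTpres : MeasurePreserving T ν ν := by
      rw [hν_def]
      exact measurePreserving_pi _ _ hfac
    have hgT : ∀ x, g (T x) = G ε x := by
      intro x
      rw [hg_def, hG_def]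
      apply Finset.sup'_congr _ rfl
      intro t _
      congr 1
      refine Finset.sum_congr rfl fun i _ => ?_
      cases hb : ε i
      · simp [hT_def, hb, rad, Prod.swap]
      · simp [hT_def, hb, rad]
    have hGint : Integrable (G ε) ν := by
      have := (hTpres.integrable_comp hgm.aestronglyMeasurable).mpr hgint
      exact this.congr (Filter.Eventually.of_forall fun x => hgT x)
    refine ⟨hGint, ?_⟩
    calc ∫ x, g x ∂ν = ∫ x, g x ∂(ν.map T) := by rw [hTpres.map_eq]
      _ = ∫ x, g (T x) ∂ν := integral_map hTpres.measurable.aemeasurable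
          (by rw [hTpres.map_eq]; exact hgm.aestronglyMeasurable)
      _ = ∫ x, G ε x ∂ν := integral_congr_ae (Filter.Eventually.of_forall hgT)
  have havg : ∫ x, g x ∂ν = ∫ x, (∑ ε : Fin n → Bool, G ε x) / 2 ^ n ∂ν := by
    have h2n : ((2:ℝ) ^ n) ≠ 0 := by positivity
    have h1 : ∫ x, (∑ ε : Fin n → Bool, G ε x) / 2 ^ n ∂ν
        = (∑ ε : Fin n → Bool, ∫ x, G ε x ∂ν) / 2 ^ n := by
      rw [integral_div, integral_finset_sum _ (fun ε _ => (hkey ε).1)]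
    rw [h1]
    have h2 : ∑ ε : Fin n → Bool, ∫ x, G ε x ∂ν
        = (2 ^ n : ℝ) * ∫ x, g x ∂ν := by
      rw [Finset.sum_congr rfl (fun ε _ => ((hkey ε).2).symm), Finset.sum_const,
        Finset.card_univ, Fintype.card_fun]
      simp [nsmul_eq_mul]
    rw [h2]
    field_simp
  -- Step E : pointwise Rademacher bound
  set K : ℝ := Real.sqrt (2 * Real.log (2 * (Fintype.card (Fin M × Fin M)))) with hK_def
  have hW10 : ∀ x, 0 ≤ W1 x := fun x => sup'_nonneg' (fun j => by positivity)
  have hW20 : ∀ x, 0 ≤ W2 x := fun x => sup'_nonneg' (fun j => by positivity)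
  have hpt : ∀ x, (∑ ε : Fin n → Bool, G ε x) / 2 ^ n
      ≤ K * (Real.sqrt 2 * (Real.sqrt (W1 x) + Real.sqrt (W2 x))) := by
    intro x
    have h := rademacher_max (τ := Fin M × Fin M)
      (a := fun i t => (x i).1 t.1 * (x i).1 t.2 - (x i).2 t.1 * (x i).2 t.2)
    rw [hG_def, hK_def]
    refine h.trans (mul_le_mul_of_nonneg_left ?_ (Real.sqrt_nonneg _))
    have hsup_le : univ.sup' univ_nonempty (fun t : Fin M × Fin M =>
        ∑ i, ((x i).1 t.1 * (x i).1 t.2 - (x i).2 t.1 * (x i).2 t.2) ^ 2)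
          ≤ 2 * W1 x + 2 * W2 x := by
      apply Finset.sup'_le
      intro t _
      have hterm : ∀ i : Fin n, ((x i).1 t.1 * (x i).1 t.2 - (x i).2 t.1 * (x i).2 t.2) ^ 2
          ≤ (((x i).1 t.1 ^ 4 + (x i).1 t.2 ^ 4) + ((x i).2 t.1 ^ 4 + (x i).2 t.2 ^ 4)) := by
        intro i
        nlinarith [sq_nonneg ((x i).1 t.1 ^ 2 - (x i).1 t.2 ^ 2),
          sq_nonneg ((x i).2 t.1 ^ 2 - (x i).2 t.2 ^ 2),
          sq_nonneg ((x i).1 t.1 * (x i).1 t.2), sq_nonneg ((x i).2 t.1 * (x i).2 t.2),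
          sq_nonneg ((x i).1 t.1 * (x i).1 t.2 + (x i).2 t.1 * (x i).2 t.2),
          sq_nonneg ((x i).1 t.1 * (x i).1 t.2 - (x i).2 t.1 * (x i).2 t.2)]
      calc ∑ i, ((x i).1 t.1 * (x i).1 t.2 - (x i).2 t.1 * (x i).2 t.2) ^ 2
          ≤ ∑ i, (((x i).1 t.1 ^ 4 + (x i).1 t.2 ^ 4) + ((x i).2 t.1 ^ 4 + (x i).2 t.2 ^ 4)) :=
            Finset.sum_le_sum fun i _ => hterm i
        _ = ((∑ i, (x i).1 t.1 ^ 4) + (∑ i, (x i).1 t.2 ^ 4))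
            + ((∑ i, (x i).2 t.1 ^ 4) + (∑ i, (x i).2 t.2 ^ 4)) := by
            rw [Finset.sum_add_distrib, Finset.sum_add_distrib, Finset.sum_add_distrib]
        _ ≤ (W1 x + W1 x) + (W2 x + W2 x) := by
            have h1 := le_sup'_univ (fun j : Fin M => ∑ i, ((x i).1 j) ^ 4) t.1
            have h2 := le_sup'_univ (fun j : Fin M => ∑ i, ((x i).1 j) ^ 4) t.2
            have h3 := le_sup'_univ (fun j : Fin M => ∑ i, ((x i).2 j) ^ 4) t.1
            have h4 := le_sup'_univ (fun j : Fin M => ∑ i, ((x i).2 j) ^ 4) t.2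
            rw [hW1_def, hW2_def]
            exact add_le_add (add_le_add h1 h2) (add_le_add h3 h4)
        _ = 2 * W1 x + 2 * W2 x := by ring
    calc Real.sqrt (univ.sup' univ_nonempty (fun t : Fin M × Fin M =>
            ∑ i, ((x i).1 t.1 * (x i).1 t.2 - (x i).2 t.1 * (x i).2 t.2) ^ 2))
        ≤ Real.sqrt (2 * W1 x + 2 * W2 x) := Real.sqrt_le_sqrt hsup_le
      _ ≤ Real.sqrt (2 * W1 x) + Real.sqrt (2 * W2 x) := by
          apply sqrt_add_le'
          · have := hW10 x; linarith
          · have := hW20 x; linarith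
      _ = Real.sqrt 2 * (Real.sqrt (W1 x) + Real.sqrt (W2 x)) := by
          rw [Real.sqrt_mul (by norm_num) (W1 x), Real.sqrt_mul (by norm_num) (W2 x)]
          ring
  -- Step F : transport of the W-integrals
  have hπ1 : MeasurePreserving (fun x : Fin n → (Fin M → ℝ) × (Fin M → ℝ) => fun i => (x i).1)
      ν (Measure.pi fun i => P.map (ξ i)) := by
    rw [hν_def]
    exact measurePreserving_pi _ _ (fun i => ⟨measurable_fst, by
      rw [Measure.map_fst_prod]; simp⟩)
  have hπ2 : MeasurePreserving (fun x : Fin n → (Fin M → ℝ) × (Fin M → ℝ) => fun i => (x i).2)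
      ν (Measure.pi fun i => P.map (ξ i)) := by
    rw [hν_def]
    exact measurePreserving_pi _ _ (fun i => ⟨measurable_snd, by
      rw [Measure.map_snd_prod]; simp⟩)
  have hsqWEm : Measurable (fun y => Real.sqrt (WE y)) :=
    Real.continuous_sqrt.measurable.comp hWEm
  have hWEJ : ∀ ω, WE (J ω) = WΩ ω := fun ω => rfl
  have hsqWE_int_pi : Integrable (fun y => Real.sqrt (WE y)) (Measure.pi fun i => P.map (ξ i)) := by
    rw [← hlaw]
    refine (integrable_map_measure ?_ hJm.aemeasurable).mpr ?_
    · rw [hlaw]; exact hsqWEm.aestronglyMeasurable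
    · exact hsqWint.congr (Filter.Eventually.of_forall fun ω => by rw [Function.comp_apply, hWEJ])
  have h_int_pi : ∫ y, Real.sqrt (WE y) ∂(Measure.pi fun i => P.map (ξ i))
      = ∫ ω, Real.sqrt (WΩ ω) ∂P := by
    rw [← hlaw, integral_map hJm.aemeasurable (by rw [hlaw]; exact hsqWEm.aestronglyMeasurable)]
  have hW1π : ∀ x, W1 x = WE (fun i => (x i).1) := fun x => rfl
  have hW2π : ∀ x, W2 x = WE (fun i => (x i).2) := fun x => rfl
  have hsqW1int : Integrable (fun x => Real.sqrt (W1 x)) ν := by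
    have := (hπ1.integrable_comp hsqWEm.aestronglyMeasurable).mpr hsqWE_int_pi
    exact this.congr (Filter.Eventually.of_forall fun x => by
      rw [Function.comp_apply, ← hW1π])
  have hsqW2int : Integrable (fun x => Real.sqrt (W2 x)) ν := by
    have := (hπ2.integrable_comp hsqWEm.aestronglyMeasurable).mpr hsqWE_int_pi
    exact this.congr (Filter.Eventually.of_forall fun x => by
      rw [Function.comp_apply, ← hW2π])
  have h_intW1 : ∫ x, Real.sqrt (W1 x) ∂ν = ∫ ω, Real.sqrt (WΩ ω) ∂P := by
    rw [← h_int_pi, ← hπ1.map_eq,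
      integral_map hπ1.measurable.aemeasurable
        (by rw [hπ1.map_eq]; exact hsqWEm.aestronglyMeasurable)]
  have h_intW2 : ∫ x, Real.sqrt (W2 x) ∂ν = ∫ ω, Real.sqrt (WΩ ω) ∂P := by
    rw [← h_int_pi, ← hπ2.map_eq,
      integral_map hπ2.measurable.aemeasurable
        (by rw [hπ2.map_eq]; exact hsqWEm.aestronglyMeasurable)]
  -- Step G : Jensen for the square root
  have hjensen : ∫ ω, Real.sqrt (WΩ ω) ∂P ≤ Real.sqrt (∫ ω, WΩ ω ∂P) := by
    have h := (Real.strictConcaveOn_sqrt.concaveOn).le_map_integral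
      Real.continuous_sqrt.continuousOn isClosed_Ici
      (Filter.Eventually.of_forall fun ω => Set.mem_Ici.mpr (hWΩ0 ω)) hWΩint
      (by exact hsqWint)
    exact h
  -- rewrite the goal
  have hgoalL : ∫ ω, (⨆ j : Fin M, ⨆ k : Fin M,
      |∑ i : Fin n, (ξ i ω j * ξ i ω k - ∫ ω', ξ i ω' j * ξ i ω' k ∂P)|) ∂P
      = ∫ ω, univ.sup' univ_nonempty
          (fun t : Fin M × Fin M => |∑ i, (ξ i ω t.1 * ξ i ω t.2 - m i t)|) ∂P := by
    refine integral_congr_ae (Filter.Eventually.of_forall fun ω => ?_)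
    exact iSup_pair (fun j k => |∑ i : Fin n, (ξ i ω j * ξ i ω k - m i (j, k))|)
  have hgoalR : ∫ ω, (⨆ j : Fin M, ∑ i : Fin n, (ξ i ω j) ^ 4) ∂P = ∫ ω, WΩ ω ∂P := by
    refine integral_congr_ae (Filter.Eventually.of_forall fun ω => ?_)
    rw [hWΩ_def]
    exact (Finset.sup'_univ_eq_ciSup _).symm
  rw [hgoalL, hgoalR]
  -- numeric facts
  have hlogM0 : 0 ≤ Real.log M := Real.log_nonneg (by exact_mod_cast hM.trans' (by norm_num))
  have hKle : K ≤ Real.sqrt 6 * Real.sqrt (Real.log M) := by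
    have hcard : ((Fintype.card (Fin M × Fin M) : ℕ) : ℝ) = (M : ℝ) * M := by
      simp [Fintype.card_prod]
    have hMR : (2:ℝ) ≤ (M:ℝ) := by exact_mod_cast hM
    have hlog2M : Real.log (2 * ((M:ℝ) * M)) ≤ 3 * Real.log M := by
      rw [Real.log_mul (by norm_num) (by positivity), Real.log_mul (by positivity) (by positivity)]
      have h2M : Real.log 2 ≤ Real.log M := Real.log_le_log (by norm_num) hMR
      linarith
    rw [hK_def, hcard, ← Real.sqrt_mul (by norm_num : (0:ℝ) ≤ 6)]
    exact Real.sqrt_le_sqrt (by linarith)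
  have hK0 : 0 ≤ K := by rw [hK_def]; exact Real.sqrt_nonneg _
  have hsqint0 : 0 ≤ ∫ ω, Real.sqrt (WΩ ω) ∂P :=
    integral_nonneg fun ω => Real.sqrt_nonneg _
  -- main chain
  calc ∫ ω, univ.sup' univ_nonempty
        (fun t : Fin M × Fin M => |∑ i, (ξ i ω t.1 * ξ i ω t.2 - m i t)|) ∂P
      ≤ ∫ ω, (∫ ω', D ω ω' ∂P) ∂P := by
        refine integral_mono_of_nonneg (Filter.Eventually.of_forall fun ω => ?_)
          int_outer (Filter.Eventually.of_forall stepA)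
        exact sup'_nonneg' fun t => abs_nonneg _
    _ = ∫ p, D p.1 p.2 ∂(P.prod P) := eq_prod
    _ = ∫ x, g x ∂ν := eq_map
    _ = ∫ x, (∑ ε : Fin n → Bool, G ε x) / 2 ^ n ∂ν := havg
    _ ≤ ∫ x, K * (Real.sqrt 2 * (Real.sqrt (W1 x) + Real.sqrt (W2 x))) ∂ν := by
        refine integral_mono_of_nonneg (Filter.Eventually.of_forall fun x => ?_)
          (((hsqW1int.add hsqW2int).const_mul (Real.sqrt 2)).const_mul K)
          (Filter.Eventually.of_forall hpt)
        refine div_nonneg (Finset.sum_nonneg fun ε _ => ?_) (by positivity)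
        rw [hG_def]
        exact sup'_nonneg' fun t => abs_nonneg _
    _ = K * (Real.sqrt 2 * ((∫ x, Real.sqrt (W1 x) ∂ν) + ∫ x, Real.sqrt (W2 x) ∂ν)) := by
        rw [integral_const_mul, integral_const_mul, integral_add hsqW1int hsqW2int]
    _ = K * (Real.sqrt 2 * (2 * ∫ ω, Real.sqrt (WΩ ω) ∂P)) := by
        rw [h_intW1, h_intW2]; ring
    _ ≤ K * (Real.sqrt 2 * (2 * Real.sqrt (∫ ω, WΩ ω ∂P))) := by
        have h2 : (0:ℝ) ≤ Real.sqrt 2 := Real.sqrt_nonneg _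
        refine mul_le_mul_of_nonneg_left (mul_le_mul_of_nonneg_left ?_ h2) hK0
        linarith [hjensen]
    _ ≤ 8 * Real.sqrt (Real.log M) * Real.sqrt (∫ ω, WΩ ω ∂P) := by
        have hs0 : 0 ≤ Real.sqrt (∫ ω, WΩ ω ∂P) := Real.sqrt_nonneg _
        have h1 : K * (Real.sqrt 2 * (2 * Real.sqrt (∫ ω, WΩ ω ∂P)))
            = (2 * Real.sqrt 2 * K) * Real.sqrt (∫ ω, WΩ ω ∂P) := by ring
        rw [h1]
        refine mul_le_mul_of_nonneg_right ?_ hs0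
        have h12 : Real.sqrt 2 * Real.sqrt 6 = Real.sqrt 12 := by
          rw [← Real.sqrt_mul (by norm_num : (0:ℝ) ≤ 2)]
          norm_num
        have h12le : Real.sqrt 12 ≤ 4 := by
          nlinarith [Real.sq_sqrt (show (0:ℝ) ≤ 12 by norm_num), Real.sqrt_nonneg 12]
        calc 2 * Real.sqrt 2 * K ≤ 2 * Real.sqrt 2 * (Real.sqrt 6 * Real.sqrt (Real.log M)) := by
              refine mul_le_mul_of_nonneg_left hKle (by positivity)
          _ = 2 * Real.sqrt 12 * Real.sqrt (Real.log M) := by rw [← h12]; ring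
          _ ≤ 8 * Real.sqrt (Real.log M) := by
              refine mul_le_mul_of_nonneg_right ?_ (Real.sqrt_nonneg _)
              linarith
end
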